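/- arXiv:2309.14128 — 6 statements merged into one kernel-verified Lean document; each statement's English description precedes it below -/
import Mathlib

section
/- Let n ≥ 1, let a = (a₁,…,aₙ) ∈ ℤⁿ be a nonzero integer vector, and let c ∈ ℝ/ℤ. Then the affine toric hyperplane H = θ_a⁻¹(c) is a connected subset of Tⁿ if and only if gcd(a₁,…,aₙ) = 1 (i.e., if and only if H is simple). -/
open Set

/-- The `n`-torus `ℝⁿ/ℤⁿ`, modelled as a product of circles `ℝ/ℤ`. -/
abbrev Torus (n : ℕ) := Fin n → AddCircle (1 : ℝ)

/-- The group homomorphism `Tⁿ → ℝ/ℤ` induced by `x ↦ a₁x₁ + ⋯ + aₙxₙ`. -/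
noncomputable def theta {n : ℕ} (a : Fin n → ℤ) (x : Torus n) : AddCircle (1 : ℝ) :=
  ∑ i, a i • x i

/-- The affine toric hyperplane with normal vector `a` and intercept `c`. -/
def Hyp {n : ℕ} (a : Fin n → ℤ) (c : AddCircle (1 : ℝ)) : Set (Torus n) :=
  {x | theta a x = c}

/-- Bézout for finitely many integers. -/
lemma bezout_finset {ι : Type*} [DecidableEq ι] (s : Finset ι) (f : ι → ℤ) :
    ∃ z : ι → ℤ, ∑ i ∈ s, z i * f i = s.gcd f := by
  induction s using Finset.induction_on with
  | empty => exact ⟨0, by simp⟩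
  | @insert j s hj ih =>
    obtain ⟨z, hz⟩ := ih
    set A := Int.gcdA (f j) (s.gcd f)
    set B := Int.gcdB (f j) (s.gcd f)
    refine ⟨fun i => if i = j then A else B * z i, ?_⟩
    rw [Finset.sum_insert hj, Finset.gcd_insert]
    have h1 : ∑ i ∈ s, (if i = j then A else B * z i) * f i
        = B * ∑ i ∈ s, z i * f i := by
      rw [Finset.mul_sum]
      refine Finset.sum_congr rfl fun i hi => ?_
      rw [if_neg (by rintro rfl; exact hj hi), mul_assoc]
    rw [h1, hz]
    rw [← Int.coe_gcd, Int.gcd_eq_gcd_ab]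
    simp only [if_pos rfl, if_true, eq_self_iff_true]
    ring

/-- Coercion of a finite sum of reals into the circle. -/
lemma coe_sum_circle {n : ℕ} (t : Fin n → ℝ) :
    ((∑ i, t i : ℝ) : AddCircle (1 : ℝ)) = ∑ i, ((t i : ℝ) : AddCircle (1 : ℝ)) :=
  map_sum (QuotientAddGroup.mk' _) t Finset.univ

lemma theta_coe {n : ℕ} (a : Fin n → ℤ) (u : Fin n → ℝ) :
    theta a (fun i => ((u i : ℝ) : AddCircle (1 : ℝ)))
      = ((∑ i, (a i : ℝ) * u i : ℝ) : AddCircle (1 : ℝ)) := by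
  rw [theta, coe_sum_circle]
  refine Finset.sum_congr rfl fun i _ => ?_
  rw [← AddCircle.coe_zsmul, zsmul_eq_mul]

/-- An affine toric hyperplane `H = θ_a⁻¹(c)` on `Tⁿ` (with `a ≠ 0`, `n ≥ 1`) is connected
if and only if it is simple, i.e. `gcd(a₁, …, aₙ) = 1`. -/
theorem hyperplane_connected_iff_simple {n : ℕ} (hn : 1 ≤ n) (a : Fin n → ℤ) (ha : a ≠ 0)
    (c : AddCircle (1 : ℝ)) :
    IsConnected (Hyp a c) ↔ Finset.univ.gcd a = 1 := by
  constructor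
  · -- connected → gcd = 1
    intro hconn
    by_contra hg1
    set g : ℤ := Finset.univ.gcd a with hgdef
    have hg0 : g ≠ 0 := by
      intro h
      exact ha (funext fun i => Finset.gcd_eq_zero_iff.1 h i (Finset.mem_univ i))
    have hgnn : 0 ≤ g := by
      rw [hgdef, ← Finset.normalize_gcd, ← Int.abs_eq_normalize]
      exact abs_nonneg _
    have hg2 : 2 ≤ g := by omega
    have hdvd : ∀ i, g ∣ a i := fun i => Finset.gcd_dvd (Finset.mem_univ i)
    set b : Fin n → ℤ := fun i => a i / g with hbdef
    have hab : ∀ i, a i = g * b i := fun i => (Int.mul_ediv_cancel' (hdvd i)).symm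
    -- θ_a = g • θ_b
    have hfactor : ∀ x : Torus n, theta a x = g • theta b x := by
      intro x
      rw [theta, theta, Finset.smul_sum]
      exact Finset.sum_congr rfl fun i _ => by rw [hab i, mul_smul]
    -- θ_b is surjective
    obtain ⟨j, hj⟩ : ∃ j, a j ≠ 0 := by
      by_contra h
      push_neg at h
      exact ha (funext h)
    have hbj : b j ≠ 0 := fun h => hj (by rw [hab j, h, mul_zero])
    have hbjR : (b j : ℝ) ≠ 0 := Int.cast_ne_zero.2 hbj
    have hsurj : Function.Surjective (theta b) := by
      intro y
      obtain ⟨t, rfl⟩ := QuotientAddGroup.mk_surjective y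
      refine ⟨fun i => (((if i = j then t / b j else 0 : ℝ)) : AddCircle (1:ℝ)), ?_⟩
      rw [theta_coe]
      congr 1
      rw [Finset.sum_eq_single j]
      · rw [if_pos rfl, mul_div_cancel₀ _ hbjR]
      · intro i _ hij; rw [if_neg hij, mul_zero]
      · intro h; exact absurd (Finset.mem_univ j) h
    -- the image of H under θ_b
    obtain ⟨x₀, hx₀⟩ := hconn.nonempty
    set y₀ : AddCircle (1:ℝ) := theta b x₀ with hy₀def
    have hgy₀ : g • y₀ = c := by rw [← hfactor]; exact hx₀
    have himg : theta b '' Hyp a c = {y | g • y = c} := by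
      ext y
      constructor
      · rintro ⟨x, hx, rfl⟩
        rw [mem_setOf_eq, ← hfactor]; exact hx
      · intro hy
        obtain ⟨x, rfl⟩ := hsurj y
        exact ⟨x, by rw [Hyp, mem_setOf_eq, hfactor]; exact hy, rfl⟩
    -- {y | g • y = c} is finite
    have hkey : ∀ y : AddCircle (1:ℝ), g • y = c →
        ∃ m : ℕ, m < g.toNat ∧ y = y₀ + (((m : ℝ) / (g : ℝ)) : AddCircle (1:ℝ)) := by
      intro y hy
      obtain ⟨r, hr⟩ := QuotientAddGroup.mk_surjective (y - y₀)
      set t : ℝ := Int.fract r with htdef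
      have htr : ((t : ℝ) : AddCircle (1:ℝ)) = y - y₀ := by
        have h0 : ((t - r : ℝ) : AddCircle (1:ℝ)) = 0 := by
          rw [AddCircle.coe_eq_zero_iff]
          refine ⟨-⌊r⌋, ?_⟩
          rw [zsmul_eq_mul, mul_one]
          have := Int.self_sub_fract r
          push_cast
          linarith [Int.self_sub_fract r]
        have h1 : ((t : ℝ) : AddCircle (1:ℝ))
            = ((r : ℝ) : AddCircle (1:ℝ)) + ((t - r : ℝ) : AddCircle (1:ℝ)) := by
          rw [← AddCircle.coe_add]; congr 1; ring
        rw [h1, h0, add_zero, hr]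
      have hgt : ((g • t : ℝ) : AddCircle (1:ℝ)) = 0 := by
        rw [AddCircle.coe_zsmul, htr, smul_sub, hy, hgy₀, sub_self]
      rw [AddCircle.coe_eq_zero_iff] at hgt
      obtain ⟨m, hm⟩ := hgt
      rw [zsmul_eq_mul, mul_one, zsmul_eq_mul] at hm
      have ht0 : 0 ≤ t := Int.fract_nonneg r
      have ht1 : t < 1 := Int.fract_lt_one r
      have hgR : (0:ℝ) < (g:ℝ) := by exact_mod_cast (by omega : (0:ℤ) < g)
      have htm : t = (m : ℝ) / (g : ℝ) := by
        field_simp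
        linarith [hm]
      have hm0 : 0 ≤ m := by
        have : (0:ℝ) ≤ (m:ℝ) := by rw [hm]; positivity
        exact_mod_cast this
      have hmg : m < g := by
        have : (m:ℝ) < (g:ℝ) := by rw [hm]; nlinarith
        exact_mod_cast this
      refine ⟨m.toNat, by omega, ?_⟩
      have : y = y₀ + ((t : ℝ) : AddCircle (1:ℝ)) := by rw [htr]; abel
      have hcast : ((m.toNat : ℕ) : ℝ) = (m : ℝ) := by exact_mod_cast Int.toNat_of_nonneg hm0
      rw [this, htm, ← hcast]
    have hSfin : ({y : AddCircle (1:ℝ) | g • y = c}).Finite := by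
      apply Set.Finite.subset (Set.Finite.image
        (fun m : ℕ => y₀ + (((m : ℝ) / (g : ℝ)) : AddCircle (1:ℝ)))
        (Set.finite_Iio g.toNat))
      intro y hy
      obtain ⟨m, hm, hym⟩ := hkey y hy
      exact ⟨m, hm, hym.symm⟩
    -- two distinct points of the fiber
    have hy₀S : y₀ ∈ {y : AddCircle (1:ℝ) | g • y = c} := hgy₀
    set y₁ : AddCircle (1:ℝ) := y₀ + (((g : ℝ)⁻¹ : ℝ) : AddCircle (1:ℝ)) with hy₁def
    have hgR : (0:ℝ) < (g:ℝ) := by exact_mod_cast (by omega : (0:ℤ) < g)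
    have hy₁S : y₁ ∈ {y : AddCircle (1:ℝ) | g • y = c} := by
      have : g • (((g : ℝ)⁻¹ : ℝ) : AddCircle (1:ℝ)) = 0 := by
        rw [← AddCircle.coe_zsmul, zsmul_eq_mul, mul_inv_cancel₀ (ne_of_gt hgR)]
        exact AddCircle.coe_period 1
      rw [mem_setOf_eq, hy₁def, smul_add, hgy₀, this, add_zero]
    have hy₁ne : y₁ ≠ y₀ := by
      intro h
      have h2 : (((g : ℝ)⁻¹ : ℝ) : AddCircle (1:ℝ)) = 0 := by
        have := congrArg (fun z => z - y₀) h
        simpa [hy₁def, add_sub_cancel_left] using this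
      rw [AddCircle.coe_eq_zero_iff] at h2
      obtain ⟨k, hk⟩ := h2
      rw [zsmul_eq_mul, mul_one] at hk
      have h3 : (0:ℝ) < (g:ℝ)⁻¹ := by positivity
      have h4 : (g:ℝ)⁻¹ < 1 := by
        rw [inv_lt_one_iff₀]; right; exact_mod_cast (by omega : (1:ℤ) < g)
      have : (0:ℝ) < (k:ℝ) := by rw [hk]; exact h3
      have : (k:ℝ) < 1 := by rw [hk]; exact h4
      have hk0 : 0 < k := by exact_mod_cast ‹(0:ℝ) < (k:ℝ)›
      have hk1 : k < 1 := by exact_mod_cast ‹(k:ℝ) < 1›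
      omega
    -- connected image with a clopen separation: contradiction
    have hcont : Continuous (theta b) := by
      apply continuous_finset_sum
      intro i _
      exact (continuous_zsmul (b i)).comp (continuous_apply i)
    have hSconn : IsConnected {y : AddCircle (1:ℝ) | g • y = c} := by
      rw [← himg]
      exact hconn.image _ hcont.continuousOn
    set S := {y : AddCircle (1:ℝ) | g • y = c}
    have hFclosed : IsClosed (S \ {y₀}) := (hSfin.subset diff_subset).isClosed
    have := hSconn.isPreconnected (S \ {y₀})ᶜ {y₀}ᶜ hFclosed.isOpen_compl
      isClosed_singleton.isOpen_compl
      (fun y hy => by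
        by_cases h : y = y₀
        · left; simp [h]
        · right; exact h)
      ⟨y₀, hy₀S, by simp⟩
      ⟨y₁, hy₁S, hy₁ne⟩
    obtain ⟨y, hyS, hyU, hyV⟩ := this
    exact hyU ⟨hyS, hyV⟩
  · -- gcd = 1 → connected
    intro hgcd
    obtain ⟨z, hz⟩ := bezout_finset Finset.univ a
    rw [hgcd] at hz
    obtain ⟨t₀, ht₀⟩ := QuotientAddGroup.mk_surjective c
    set W : Set (Fin n → ℝ) := {v | ∑ i, (a i : ℝ) * v i = t₀} with hWdef
    have hWconv : Convex ℝ W := by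
      intro v hv w hw s t hs ht hst
      simp only [hWdef, mem_setOf_eq] at hv hw ⊢
      have : ∑ i, (a i : ℝ) * (s • v + t • w) i
          = s * ∑ i, (a i : ℝ) * v i + t * ∑ i, (a i : ℝ) * w i := by
        rw [Finset.mul_sum, Finset.mul_sum, ← Finset.sum_add_distrib]
        refine Finset.sum_congr rfl fun i _ => ?_
        simp [Pi.add_apply, Pi.smul_apply, smul_eq_mul]
        ring
      rw [this, hv, hw]
      linear_combination t₀ * hst
    have hWne : W.Nonempty := by
      refine ⟨fun i => (z i : ℝ) * t₀, ?_⟩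
      simp only [hWdef, mem_setOf_eq]
      have : ∑ i, (a i : ℝ) * ((z i : ℝ) * t₀) = ((∑ i, z i * a i : ℤ) : ℝ) * t₀ := by
        push_cast
        rw [Finset.sum_mul]
        exact Finset.sum_congr rfl fun i _ => by ring
      rw [this, hz]
      push_cast; ring
    have hHimg : Hyp a c = (fun v : Fin n → ℝ => fun i => ((v i : ℝ) : AddCircle (1:ℝ))) '' W := by
      ext x
      constructor
      · intro hx
        choose u hu using fun i => QuotientAddGroup.mk_surjective (x i)
        have hθ : theta a x = ((∑ i, (a i : ℝ) * u i : ℝ) : AddCircle (1:ℝ)) := by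
          rw [← theta_coe]
          congr 1
          funext i
          exact (hu i).symm
        have hc : ((∑ i, (a i : ℝ) * u i - t₀ : ℝ) : AddCircle (1:ℝ)) = 0 := by
          rw [AddCircle.coe_sub, ht₀, ← hθ, hx, sub_self]
        rw [AddCircle.coe_eq_zero_iff] at hc
        obtain ⟨m, hm⟩ := hc
        rw [zsmul_eq_mul, mul_one] at hm
        refine ⟨fun i => u i - (m : ℝ) * (z i : ℝ), ?_, ?_⟩
        · simp only [hWdef, mem_setOf_eq]
          have h1 : ∑ i, (a i : ℝ) * (u i - (m : ℝ) * (z i : ℝ))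
              = ∑ i, (a i : ℝ) * u i - (m : ℝ) * ∑ i, (z i : ℝ) * (a i : ℝ) := by
            rw [Finset.mul_sum, ← Finset.sum_sub_distrib]
            exact Finset.sum_congr rfl fun i _ => by ring
          have h2 : ∑ i, (z i : ℝ) * (a i : ℝ) = 1 := by
            have h3 := congrArg (fun k : ℤ => (k : ℝ)) hz
            push_cast at h3
            exact h3
          rw [h1, h2, mul_one]
          linarith [hm]
        · funext i
          show ((u i - (m : ℝ) * (z i : ℝ) : ℝ) : AddCircle (1:ℝ)) = x i
          have : (((m : ℝ) * (z i : ℝ) : ℝ) : AddCircle (1:ℝ)) = 0 := by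
            rw [AddCircle.coe_eq_zero_iff]
            exact ⟨m * z i, by rw [zsmul_eq_mul, mul_one]; push_cast; ring⟩
          rw [AddCircle.coe_sub, this, sub_zero]
          exact hu i
      · rintro ⟨v, hv, rfl⟩
        rw [Hyp, mem_setOf_eq, theta_coe, hv, ht₀]
    rw [hHimg]
    have hcont : Continuous (fun v : Fin n → ℝ => fun i => ((v i : ℝ) : AddCircle (1:ℝ))) :=
      continuous_pi fun i => (AddCircle.continuous_mk' 1).comp (continuous_apply i)
    exact (hWconv.isConnected hWne).image _ hcont.continuousOn
end

section
/- Let (A, Tⁿ) be a spanning toric hyperplane arrangement in general position with |A| ≥ n. Then every connected component of the complement Tⁿ \ ⋃_{H ∈ A} H is simply connected. -/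
open Set
open Function Topology

/-- The set of connected components of a subset `A` of a topological space. -/
def comps {X : Type*} [TopologicalSpace X] (A : Set X) : Set (Set X) :=
  {C | ∃ x ∈ A, C = connectedComponentIn A x}

/-- An arrangement (given by normal vectors `a`) is spanning if some `n` of the normal
vectors are linearly independent over `ℚ`. -/
def Spanning {ι : Type*} [Fintype ι] {n : ℕ} (a : ι → Fin n → ℤ) : Prop :=
  ∃ s : Finset ι, s.card = n ∧
    LinearIndependent ℚ (fun i : s => fun j => (a i.1 j : ℚ))

/-- An arrangement is in general position if for every subset `S` of hyperplanes with
nonempty intersection, the corresponding normal vectors are linearly independent over `ℚ`. -/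
def GenPos {ι : Type*} [Fintype ι] {n : ℕ} (a : ι → Fin n → ℤ)
    (b : ι → AddCircle (1 : ℝ)) : Prop :=
  ∀ S : Finset ι, (⋂ i ∈ S, Hyp (a i) (b i)).Nonempty →
    LinearIndependent ℚ (fun i : S => fun j => (a i.1 j : ℚ))

namespace TorusPf

noncomputable def pmap (n : ℕ) : (Fin n → ℝ) → Torus n := fun y i => (y i : AddCircle (1:ℝ))

lemma coe_eq_coe_iff (x y : ℝ) : (x : AddCircle (1:ℝ)) = y ↔ ∃ k : ℤ, x - y = k := by
  rw [QuotientAddGroup.eq_iff_sub_mem]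
  simp only [AddSubgroup.mem_zmultiples_iff, zsmul_eq_mul, mul_one]
  exact ⟨fun ⟨k, hk⟩ => ⟨k, hk.symm⟩, fun ⟨k, hk⟩ => ⟨k, hk.symm⟩⟩

lemma continuous_pmap (n : ℕ) : Continuous (pmap n) :=
  continuous_pi fun i => continuous_quotient_mk'.comp (continuous_apply i)

lemma isOpenMap_pmap (n : ℕ) : IsOpenMap (pmap n) :=
  IsOpenMap.piMap (fun _ => QuotientAddGroup.isOpenMap_coe)
    (Filter.Eventually.of_forall fun _ => QuotientAddGroup.mk_surjective)

lemma surjective_pmap (n : ℕ) : Surjective (pmap n) := by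
  intro x
  choose y hy using fun i => QuotientAddGroup.mk_surjective (x i)
  exact ⟨y, funext hy⟩

lemma isQuotientMap_pmap (n : ℕ) : IsQuotientMap (pmap n) :=
  (isOpenMap_pmap n).isQuotientMap (continuous_pmap n) (surjective_pmap n)

lemma pmap_eq_iff {n : ℕ} (y z : Fin n → ℝ) :
    pmap n y = pmap n z ↔ ∀ i, ∃ k : ℤ, y i - z i = k := by
  rw [funext_iff]
  exact forall_congr' fun i => coe_eq_coe_iff _ _

noncomputable def dpL {n : ℕ} (w : Fin n → ℝ) : (Fin n → ℝ) →ₗ[ℝ] ℝ :=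
  ∑ j, w j • LinearMap.proj j

lemma dpL_apply {n : ℕ} (w y : Fin n → ℝ) : dpL w y = ∑ j, w j * y j := by
  simp [dpL]

lemma continuous_dpL {n : ℕ} (w : Fin n → ℝ) : Continuous (dpL w) := by
  have : ⇑(dpL w) = fun y => ∑ j, w j * y j := funext fun y => dpL_apply w y
  rw [this]
  exact continuous_finset_sum _ fun j _ => continuous_const.mul (continuous_apply j)

lemma theta_pmap {n : ℕ} (a : Fin n → ℤ) (y : Fin n → ℝ) :
    theta a (pmap n y) = ((∑ j, (a j : ℝ) * y j : ℝ) : AddCircle (1:ℝ)) := by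
  unfold theta pmap
  calc ∑ i, a i • ((y i : ℝ) : AddCircle (1:ℝ))
      = ∑ i, (QuotientAddGroup.mk' (AddSubgroup.zmultiples (1:ℝ))) ((a i : ℝ) * y i) := by
        refine Finset.sum_congr rfl fun j _ => ?_
        rw [← zsmul_eq_mul]
        rfl
    _ = _ := by
        rw [← map_sum (QuotientAddGroup.mk' (AddSubgroup.zmultiples (1:ℝ))) (fun j => (a j : ℝ) * y j) Finset.univ]
        rfl

lemma exists_dot_ne_zero {n m : ℕ} (a : Fin m → Fin n → ℤ) (hspan : Spanning a)
    (k : Fin n → ℤ) (hk : k ≠ 0) : ∃ i, (∑ j, a i j * k j) ≠ 0 := by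
  by_contra h
  push_neg at h
  obtain ⟨s, hcard, hli⟩ := hspan
  have hn : s.Nonempty := by
    rcases Finset.eq_empty_or_nonempty s with rfl | h'
    · exfalso
      apply hk
      have hn0 : n = 0 := by simpa using hcard.symm
      subst hn0
      funext j
      exact j.elim0
    · exact h'
  haveI : Nonempty s := hn.to_subtype
  have hcard' : Fintype.card s = Module.finrank ℚ (Fin n → ℚ) := by
    rw [Fintype.card_coe, hcard, Module.finrank_pi, Fintype.card_fin]
  let B := basisOfLinearIndependentOfCardEqFinrank hli hcard'
  have hB : ⇑B = fun i : s => fun j => (a i.1 j : ℚ) :=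
    coe_basisOfLinearIndependentOfCardEqFinrank hli hcard'
  let φ : (Fin n → ℚ) →ₗ[ℚ] ℚ := ∑ j, (k j : ℚ) • LinearMap.proj j
  have hφ : ∀ v, φ v = ∑ j, (k j : ℚ) * v j := fun v => by simp [φ]
  have hφB : ∀ i : s, φ (B i) = 0 := by
    intro i
    rw [hB, hφ]
    have := h i.1
    have : ((∑ j, a i.1 j * k j : ℤ) : ℚ) = 0 := by rw [this]; simp
    push_cast at this
    rw [← this]
    exact Finset.sum_congr rfl fun j _ => mul_comm _ _
  have hφ0 : φ = 0 := B.ext fun i => by rw [hφB i]; simp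
  have hz : φ (fun j => (k j : ℚ)) = 0 := by rw [hφ0]; simp
  rw [hφ] at hz
  have := (Finset.sum_eq_zero_iff_of_nonneg (fun j _ => mul_self_nonneg ((k j : ℚ)))).mp hz
  apply hk
  funext j
  have := this j (Finset.mem_univ j)
  have : (k j : ℚ) = 0 := by nlinarith [this]
  exact_mod_cast this

end TorusPf

/-- For a spanning toric hyperplane arrangement in general position with at least `n`
hyperplanes, every connected component of the complement of the arrangement is
simply connected. -/
theorem components_of_complement_simplyConnected {n m : ℕ}
    (a : Fin m → Fin n → ℤ) (b : Fin m → AddCircle (1 : ℝ))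
    (ha : ∀ i, a i ≠ 0) (hm : n ≤ m) (hspan : Spanning a) (hgp : GenPos a b) :
    ∀ C ∈ comps (Set.univ \ ⋃ i, Hyp (a i) (b i)), SimplyConnectedSpace ↥C := by
  classical
  rintro C ⟨x, hxA, rfl⟩
  set A : Set (Torus n) := Set.univ \ ⋃ i, Hyp (a i) (b i) with hAdef
  obtain ⟨y0, hy0⟩ := TorusPf.surjective_pmap n x
  choose c hc using fun i => QuotientAddGroup.mk_surjective (b i)
  set F : Fin m → (Fin n → ℝ) →ₗ[ℝ] ℝ :=
    (fun i => TorusPf.dpL (fun j => (a i j : ℝ))) with hF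
  have hFapp : ∀ i y, F i y = ∑ j, (a i j : ℝ) * y j := fun i y => TorusPf.dpL_apply _ _
  have hHyp : ∀ (y : Fin n → ℝ) i,
      (TorusPf.pmap n y ∈ Hyp (a i) (b i)) ↔ ∃ k : ℤ, F i y - c i = k := by
    intro y i
    show theta (a i) (TorusPf.pmap n y) = b i ↔ _
    rw [TorusPf.theta_pmap, ← hc i, TorusPf.coe_eq_coe_iff, ← hFapp i y]
  have hmemA : ∀ y : Fin n → ℝ,
      TorusPf.pmap n y ∈ A ↔ ∀ i, ∀ k : ℤ, F i y - c i ≠ k := by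
    intro y
    rw [hAdef]
    simp only [Set.mem_diff, Set.mem_univ, true_and, Set.mem_iUnion, not_exists]
    exact forall_congr' fun i => by rw [hHyp y i]; exact not_exists
  set Box : (Fin n → ℝ) → Set (Fin n → ℝ) := fun u =>
    ⋂ i, (F i) ⁻¹' (Ioo ((c i + ⌊F i u - c i⌋ : ℝ)) (c i + ⌊F i u - c i⌋ + 1)) with hBox
  have hmemBoxIff : ∀ u y, y ∈ Box u ↔
      ∀ i, F i y - c i ∈ Ioo ((⌊F i u - c i⌋ : ℝ)) ((⌊F i u - c i⌋ : ℝ) + 1) := by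
    intro u y
    rw [hBox]
    simp only [Set.mem_iInter, Set.mem_preimage, Set.mem_Ioo]
    refine forall_congr' fun i => ?_
    constructor <;> intro h <;> exact ⟨by linarith [h.1], by linarith [h.2]⟩
  have hBoxOpen : ∀ u, IsOpen (Box u) := fun u =>
    isOpen_iInter_of_finite fun i =>
      IsOpen.preimage (TorusPf.continuous_dpL _) isOpen_Ioo
  have hBoxConvex : ∀ u, Convex ℝ (Box u) := fun u =>
    convex_iInter fun i => (convex_Ioo _ _).linear_preimage (F i)
  have hselfBox : ∀ u, TorusPf.pmap n u ∈ A → u ∈ Box u := by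
    intro u hu
    rw [hmemBoxIff]
    intro i
    have hni := (hmemA u).mp hu i
    have h1 : (⌊F i u - c i⌋ : ℝ) ≤ F i u - c i := Int.floor_le _
    have h2 : (⌊F i u - c i⌋ : ℝ) ≠ F i u - c i := fun h => hni ⌊F i u - c i⌋ h.symm
    exact ⟨lt_of_le_of_ne h1 h2, Int.lt_floor_add_one _⟩
  have hBoxA : ∀ u y, y ∈ Box u → TorusPf.pmap n y ∈ A := by
    intro u y hy
    rw [hmemA]
    intro i k hk
    have h := (hmemBoxIff u y).mp hy i
    rw [hk] at h
    have h1 : ⌊F i u - c i⌋ < k := by exact_mod_cast h.1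
    have h2 : (k : ℝ) < (⌊F i u - c i⌋ : ℝ) + 1 := h.2
    have h2' : k < ⌊F i u - c i⌋ + 1 := by exact_mod_cast h2
    omega
  have hBoxEqOfMem : ∀ u y, y ∈ Box u → Box y = Box u := by
    intro u y hy
    have hfl : ∀ i, ⌊F i y - c i⌋ = ⌊F i u - c i⌋ := by
      intro i
      have h := (hmemBoxIff u y).mp hy i
      rw [Int.floor_eq_iff]
      exact ⟨le_of_lt h.1, by exact_mod_cast h.2⟩
    ext z
    rw [hmemBoxIff, hmemBoxIff]
    exact forall_congr' fun i => by rw [hfl i]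
  have hFshift : ∀ i (y : Fin n → ℝ) (k : Fin n → ℤ),
      F i (y + fun j => (k j : ℝ)) = F i y + ((∑ j, a i j * k j : ℤ) : ℝ) := by
    intro i y k
    rw [hFapp, hFapp]
    push_cast
    rw [← Finset.sum_add_distrib]
    exact Finset.sum_congr rfl fun j _ => by simp [Pi.add_apply]; ring
  have hBoxShift : ∀ u y (k : Fin n → ℤ), y ∈ Box u →
      (y + fun j => (k j : ℝ)) ∈ Box (u + fun j => (k j : ℝ)) := by
    intro u y k hy
    rw [hmemBoxIff]
    intro i
    have h := (hmemBoxIff u y).mp hy i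
    rw [hFshift, hFshift]
    have hfl : ⌊F i u - c i + ((∑ j, a i j * k j : ℤ) : ℝ)⌋
        = ⌊F i u - c i⌋ + ∑ j, a i j * k j := Int.floor_add_intCast _ _
    rw [show F i u + ((∑ j, a i j * k j : ℤ) : ℝ) - c i
        = F i u - c i + ((∑ j, a i j * k j : ℤ) : ℝ) by ring, hfl]
    constructor
    · push_cast
      have := h.1
      linarith
    · push_cast
      have := h.2
      linarith
  -- main objects
  have hy0A : TorusPf.pmap n y0 ∈ A := by rw [hy0]; exact hxA
  have hy0D : y0 ∈ Box y0 := hselfBox y0 hy0A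
  have hinj : Set.InjOn (TorusPf.pmap n) (Box y0) := by
    intro d hd d' hd' he
    rw [TorusPf.pmap_eq_iff] at he
    choose k hk using he
    have hk0 : k = 0 := by
      by_contra hkne
      obtain ⟨i, hi⟩ := TorusPf.exists_dot_ne_zero a hspan k hkne
      have hde : d = d' + fun j => (k j : ℝ) := funext fun j => by
        have := hk j; simp only [Pi.add_apply]; linarith
      have hδ : F i d = F i d' + ((∑ j, a i j * k j : ℤ) : ℝ) := by
        rw [hde, hFshift]
      have h1 := (hmemBoxIff y0 d).mp hd i
      have h2 := (hmemBoxIff y0 d').mp hd' i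
      have hlt : ((∑ j, a i j * k j : ℤ) : ℝ) < 1 := by
        have := h1.2; have := h2.1; rw [hδ] at *; linarith [h1.2, h2.1]
      have hgt : (-1 : ℝ) < ((∑ j, a i j * k j : ℤ) : ℝ) := by
        linarith [h1.1, h2.2, hδ.symm.le, hδ.le]
      have hlt' : (∑ j, a i j * k j : ℤ) < 1 := by exact_mod_cast hlt
      have hgt' : (-1 : ℤ) < (∑ j, a i j * k j : ℤ) := by exact_mod_cast hgt
      omega
    funext j
    have := hk j
    rw [hk0] at this
    simp only [Pi.zero_apply, Int.cast_zero] at this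
    linarith
  have hAopen : IsOpen A := by
    rw [hAdef]
    refine IsOpen.sdiff isOpen_univ (isClosed_iUnion_of_finite fun i => ?_)
    have hcont : Continuous (theta (a i)) :=
      continuous_finset_sum _ fun j _ => (continuous_zsmul (a i j)).comp (continuous_apply j)
    exact isClosed_singleton.preimage hcont
  have hpDopen : IsOpen (TorusPf.pmap n '' Box y0) :=
    TorusPf.isOpenMap_pmap n _ (hBoxOpen y0)
  have hVopen : IsOpen (A \ TorusPf.pmap n '' Box y0) := by
    rw [← (TorusPf.isQuotientMap_pmap n).1.isOpen_preimage
      (s := A \ TorusPf.pmap n '' Box y0), Set.preimage_diff]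
    rw [isOpen_iff_forall_mem_open]
    intro z hz
    refine ⟨Box z, ?_, hBoxOpen z, hselfBox z hz.1⟩
    intro y hyB
    refine ⟨hBoxA z y hyB, ?_⟩
    rintro ⟨d, hdD, hpd⟩
    rw [TorusPf.pmap_eq_iff] at hpd
    choose k hk using hpd
    have hde : d = y + fun j => (k j : ℝ) := funext fun j => by
      have := hk j; simp only [Pi.add_apply]; linarith
    have hdBox : d ∈ Box (z + fun j => (k j : ℝ)) := hde ▸ hBoxShift z y k hyB
    have hBe : Box (z + fun j => (k j : ℝ)) = Box y0 :=
      (hBoxEqOfMem _ d hdBox).symm.trans (hBoxEqOfMem y0 d hdD)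
    have hzkA : TorusPf.pmap n (z + fun j => (k j : ℝ)) ∈ A := by
      have : TorusPf.pmap n (z + fun j => (k j : ℝ)) = TorusPf.pmap n z := by
        rw [TorusPf.pmap_eq_iff]
        exact fun i => ⟨k i, by simp⟩
      rw [this]; exact hz.1
    have hzkD : (z + fun j => (k j : ℝ)) ∈ Box y0 := by
      rw [← hBe]; exact hselfBox _ hzkA
    apply hz.2
    refine ⟨z + fun j => (k j : ℝ), hzkD, ?_⟩
    rw [TorusPf.pmap_eq_iff]
    exact fun i => ⟨k i, by simp⟩
  have hxC : x ∈ connectedComponentIn A x := mem_connectedComponentIn hxA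
  have hpDsubC : TorusPf.pmap n '' Box y0 ⊆ connectedComponentIn A x := by
    refine IsPreconnected.subset_connectedComponentIn ?_ ⟨y0, hy0D, hy0⟩ ?_
    · exact ((hBoxConvex y0).isPreconnected).image _ (TorusPf.continuous_pmap n).continuousOn
    · rintro _ ⟨y, hyD, rfl⟩; exact hBoxA y0 y hyD
  have hCsubpD : connectedComponentIn A x ⊆ TorusPf.pmap n '' Box y0 := by
    refine IsPreconnected.subset_left_of_subset_union hpDopen hVopen
      disjoint_sdiff_self_right ?_ ⟨x, hxC, ⟨y0, hy0D, hy0⟩⟩ isPreconnected_connectedComponentIn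
    intro z hz
    have hzA := connectedComponentIn_subset A x hz
    by_cases h : z ∈ TorusPf.pmap n '' Box y0
    · exact Or.inl h
    · exact Or.inr ⟨hzA, h⟩
  have hCeq : connectedComponentIn A x = TorusPf.pmap n '' Box y0 :=
    Subset.antisymm hCsubpD hpDsubC
  -- homeomorphism
  let g : Box y0 → Torus n := fun d => TorusPf.pmap n d.1
  have hgc : Continuous g := (TorusPf.continuous_pmap n).comp continuous_subtype_val
  have hgi : Injective g := fun d d' h => Subtype.ext (hinj d.2 d'.2 h)
  have hgo : IsOpenMap g := by
    intro V hV
    rw [show g = (TorusPf.pmap n) ∘ Subtype.val from rfl, Set.image_comp]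
    exact TorusPf.isOpenMap_pmap n _ ((hBoxOpen y0).isOpenMap_subtype_val V hV)
  have hge : IsOpenEmbedding g :=
    IsOpenEmbedding.of_continuous_injective_isOpenMap hgc hgi hgo
  have hrange : Set.range g = connectedComponentIn A x := by
    rw [show g = (TorusPf.pmap n) ∘ Subtype.val from rfl, Set.range_comp,
      Subtype.range_val, hCeq]
  let e : ↥(connectedComponentIn A x) ≃ₜ ↥(Box y0) :=
    ((hge.isEmbedding.toHomeomorph).trans (Homeomorph.setCongr hrange)).symm
  haveI : ContractibleSpace ↥(Box y0) := (hBoxConvex y0).contractibleSpace ⟨y0, hy0D⟩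
  haveI : ContractibleSpace ↥(connectedComponentIn A x) := e.contractibleSpace
  infer_instance
end

section
/- Let A = {H₁,…,Hₙ} be a toric hyperplane arrangement on Tⁿ consisting of exactly n hyperplanes Hᵢ = θ_{aᵢ}⁻¹(bᵢ), and let Θ be the n × n integer matrix whose i-th row is aᵢ; assume det Θ ≠ 0. Then for every 0 ≤ k ≤ n, the number of k-flats of A is f_k(A) = |det Θ| · C(n,k), where C(n,k) is the binomial coefficient. -/
open Set

/-- The set `Σ_k` of `k`-flats of an arrangement of hypersurfaces `K i` inside an
ambient space `W` of dimension `d`: `Σ_0` is the set of connected components of the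
union over `d`-element index sets `S` of `⋂_{i ∈ S} K i`; for `0 < k < d`, `Σ_k` is the
union over `(d-k)`-element index sets `S` of the sets of connected components of
`⋂_{i ∈ S} K i` minus all lower-dimensional flats; and `Σ_d` is the set of connected
components of the complement `W \ ⋃ᵢ K i`. -/
noncomputable def SigIn {X : Type*} [TopologicalSpace X] {ι : Type*} [Fintype ι]
    (W : Set X) (d : ℕ) (K : ι → Set X) : ℕ → Set (Set X) := fun k =>
  Nat.strongRecOn k (fun k ih =>
    if k = 0 then comps (⋃ S ∈ {S : Finset ι | S.card = d}, ⋂ i ∈ S, K i)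
    else if k = d then comps (W \ ⋃ i, K i)
    else ⋃ S ∈ {S : Finset ι | S.card = d - k},
      comps ((⋂ i ∈ S, K i) \ ⋃ j : Fin k, ⋃ σ ∈ ih j j.isLt, σ))

lemma SigIn_eq {X : Type*} [TopologicalSpace X] {ι : Type*} [Fintype ι]
    (W : Set X) (d : ℕ) (K : ι → Set X) (k : ℕ) :
    SigIn W d K k =
    if k = 0 then comps (⋃ S ∈ {S : Finset ι | S.card = d}, ⋂ i ∈ S, K i)
    else if k = d then comps (W \ ⋃ i, K i)
    else ⋃ S ∈ {S : Finset ι | S.card = d - k},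
      comps ((⋂ i ∈ S, K i) \ ⋃ j : Fin k, ⋃ σ ∈ SigIn W d K j, σ) := by
  unfold SigIn
  unfold Nat.strongRecOn
  rw [WellFounded.fix_eq]

namespace CFNH
variable {n : ℕ}

instance fact01 : Fact ((0:ℝ) < 1) := ⟨zero_lt_one⟩

def castVec (u : Fin n → ℤ) : Fin n → ℝ := fun i => (u i : ℝ)

@[simp] lemma castVec_apply (u : Fin n → ℤ) (i : Fin n) : castVec u i = (u i : ℝ) := rfl


/-- coordinatewise quotient map `ℝⁿ → Tⁿ`. -/
noncomputable def q (v : Fin n → ℝ) : Torus n := fun i => (v i : AddCircle (1:ℝ))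

lemma q_add (v w : Fin n → ℝ) : q (v + w) = q v + q w := by
  funext i; simp [q]

lemma continuous_q : Continuous (q (n := n)) := by
  refine continuous_pi fun i => ?_
  exact (AddCircle.continuous_mk' 1).comp (continuous_apply i)

lemma q_surjective : Function.Surjective (q (n := n)) := by
  intro x
  choose v hv using fun i => QuotientAddGroup.mk_surjective (x i)
  exact ⟨v, funext hv⟩

lemma q_eq_zero_iff (v : Fin n → ℝ) : q v = 0 ↔ ∃ u : Fin n → ℤ, v = castVec u := by
  constructor
  · intro h
    have h' : ∀ i, ∃ m : ℤ, m • (1:ℝ) = v i := by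
      intro i
      rw [← AddCircle.coe_eq_zero_iff]
      exact congrFun h i
    choose u hu using h'
    exact ⟨u, by funext i; simpa using (hu i).symm⟩
  · rintro ⟨u, rfl⟩
    funext i
    show ((u i : ℝ) : AddCircle (1:ℝ)) = 0
    rw [AddCircle.coe_eq_zero_iff]
    exact ⟨u i, by simp⟩

lemma theta_q (c : Fin n → ℤ) (v : Fin n → ℝ) :
    theta c (q v) = ((∑ j, (c j : ℝ) * v j : ℝ) : AddCircle (1:ℝ)) := by
  unfold theta q
  calc ∑ i, c i • ((v i : ℝ) : AddCircle (1:ℝ))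
      = ∑ i, (QuotientAddGroup.mk' (AddSubgroup.zmultiples (1:ℝ)) ((c i : ℝ) * v i)) := by
        refine Finset.sum_congr rfl fun i _ => ?_
        rw [QuotientAddGroup.mk'_apply, ← zsmul_eq_mul, AddCircle.coe_zsmul]
    _ = QuotientAddGroup.mk' (AddSubgroup.zmultiples (1:ℝ)) (∑ i, (c i : ℝ) * v i) :=
        (map_sum _ _ _).symm
    _ = _ := rfl

/-- The index of the image of an injective endomorphism of `ℤⁿ` equals `|det|`. -/
lemma index_range_eq_natAbs_det (f : (Fin n → ℤ) →ₗ[ℤ] (Fin n → ℤ))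
    (hinj : Function.Injective f) :
    (LinearMap.range f).toAddSubgroup.index = (LinearMap.det f).natAbs := by
  classical
  set N := LinearMap.range f with hN
  obtain ⟨m, snf⟩ := Submodule.smithNormalForm (Pi.basisFun ℤ (Fin n)) N
  have e : (Fin n → ℤ) ≃ₗ[ℤ] N := LinearEquiv.ofInjective f hinj
  have hmn : m = n := by
    have h1 : Module.finrank ℤ N = Fintype.card (Fin m) :=
      Module.finrank_eq_card_basis snf.bN
    have h2 : Module.finrank ℤ N = Fintype.card (Fin n) :=
      Module.finrank_eq_card_basis ((Pi.basisFun ℤ (Fin n)).map e)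
    simpa using h1.symm.trans h2
  subst hmn
  -- the index in terms of the diagonal entries
  have hindex : N.toAddSubgroup.index = ∏ i, (snf.a i).natAbs := by
    rw [snf.toAddSubgroup_index_eq_ite]
    simp only [Fintype.card_fin, if_pos rfl]
    refine Finset.prod_congr rfl fun i _ => ?_
    rw [Ideal.span_singleton_toAddSubgroup_eq_zmultiples, Int.index_zmultiples]
  -- the determinant in terms of the diagonal entries
  have hbij : Function.Bijective snf.f := Finite.injective_iff_bijective.mp snf.f.injective
  set σ : Fin m ≃ Fin m := Equiv.ofBijective snf.f hbij with hσ
  have hσj : ∀ j, σ j = snf.f j := fun j => rfl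
  have hsj : ∀ j, σ.symm (snf.f j) = j := fun j => by
    rw [← hσj j]; exact σ.symm_apply_apply j
  set D : Matrix (Fin m) (Fin m) ℤ := (Matrix.diagonal snf.a).submatrix σ.symm id with hD
  set w : (Fin m → ℤ) ≃ₗ[ℤ] (Fin m → ℤ) := snf.bM.equivFun.symm with hw
  set p : (Fin m → ℤ) →ₗ[ℤ] (Fin m → ℤ) := N.subtype ∘ₗ (snf.bN.equivFun.symm : _ ≃ₗ[ℤ] _) with hp
  have hpd : p = (w : (Fin m → ℤ) →ₗ[ℤ] (Fin m → ℤ)) ∘ₗ Matrix.toLin' D := by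
    refine Module.Basis.ext (Pi.basisFun ℤ (Fin m)) fun j => ?_
    have hbase : (Pi.basisFun ℤ (Fin m)) j = Pi.single j 1 := by
      simp [Pi.basisFun_apply]
    rw [hbase]
    have hl : p (Pi.single j 1) = (snf.bN j : Fin m → ℤ) := by
      rw [hp, LinearMap.comp_apply, LinearEquiv.coe_coe, Basis.equivFun_symm_single]
      rfl
    have hDv : Matrix.toLin' D (Pi.single j 1) = Pi.single (snf.f j) (snf.a j) := by
      funext i
      rw [Matrix.toLin'_apply, Matrix.mulVec_single]
      show D i j * 1 = _
      rw [mul_one]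
      by_cases hij : i = snf.f j
      · subst hij
        simp [hD, Matrix.submatrix_apply, Matrix.diagonal_apply, hsj j, Pi.single_apply]
      · have h2 : σ.symm i ≠ j := fun h => hij (((Equiv.symm_apply_eq σ).mp h).trans (hσj j))
        simp [hD, Matrix.submatrix_apply, Matrix.diagonal_apply, h2, Pi.single_apply,
          Ne.symm hij]
    rw [hl, LinearMap.comp_apply, hDv]
    have hwv : w (Pi.single (snf.f j) (snf.a j)) = snf.a j • snf.bM (snf.f j) := by
      have hs : (Pi.single (snf.f j) (snf.a j) : Fin m → ℤ) = snf.a j • Pi.single (snf.f j) 1 := by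
        funext i; simp [Pi.single_apply, mul_comm]
      rw [hw, hs, map_smul, Basis.equivFun_symm_single]
    rw [LinearEquiv.coe_coe, hwv, ← snf.snf j]
  have hpinj : Function.Injective p := by
    rw [hp]
    exact N.injective_subtype.comp (snf.bN.equivFun.symm.injective)
  have hprange : LinearMap.range p = N := by
    rw [hp, LinearMap.range_comp, LinearEquiv.range, Submodule.map_top, Submodule.range_subtype]
  -- f = p ∘ u for an automorphism u
  have hfn : LinearMap.range f = LinearMap.range p := by rw [hprange]
  set u : (Fin m → ℤ) ≃ₗ[ℤ] (Fin m → ℤ) :=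
    (LinearEquiv.ofInjective f hinj).trans
      ((LinearEquiv.ofEq _ _ hfn).trans (LinearEquiv.ofInjective p hpinj).symm) with hu
  have hfpu : f = p ∘ₗ (u : (Fin m → ℤ) →ₗ[ℤ] (Fin m → ℤ)) := by
    refine LinearMap.ext fun x => ?_
    have h1 : p (u x) = ((LinearEquiv.ofInjective p hpinj) (u x) : Fin m → ℤ) := by
      rw [LinearEquiv.ofInjective_apply]
    rw [LinearMap.comp_apply, LinearEquiv.coe_coe, h1, hu]
    simp only [LinearEquiv.trans_apply, LinearEquiv.apply_symm_apply]
    rfl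
  have hdetu : (LinearMap.det (u : (Fin m → ℤ) →ₗ[ℤ] (Fin m → ℤ))).natAbs = 1 := by
    rcases Int.isUnit_iff.mp u.isUnit_det' with h | h <;> rw [h] <;> rfl
  have hdetw : (LinearMap.det (w : (Fin m → ℤ) →ₗ[ℤ] (Fin m → ℤ))).natAbs = 1 := by
    rcases Int.isUnit_iff.mp w.isUnit_det' with h | h <;> rw [h] <;> rfl
  have hdetD : (Matrix.det D).natAbs = ∏ i, (snf.a i).natAbs := by
    rw [hD, Matrix.det_permute (σ.symm : Equiv.Perm (Fin m)), Int.natAbs_mul,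
      Matrix.det_diagonal, Int.cast_id, Int.units_natAbs, one_mul]
    exact map_prod Int.natAbsHom snf.a Finset.univ
  have hfin : (LinearMap.det f).natAbs = ∏ i, (snf.a i).natAbs := by
    rw [hfpu, LinearMap.det_comp, Int.natAbs_mul, hdetu, mul_one, hpd, LinearMap.det_comp,
      Int.natAbs_mul, hdetw, one_mul, LinearMap.det_toLin', hdetD]
  rw [hfin, hindex]

noncomputable def Amat (a : Fin n → Fin n → ℤ) : Matrix (Fin n) (Fin n) ℝ :=
  (Matrix.of a).map (Int.cast : ℤ → ℝ)

lemma mulVec_castVec (a : Fin n → Fin n → ℤ) (u : Fin n → ℤ) :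
    (Amat a).mulVec (castVec u) = castVec ((Matrix.of a).mulVec u) := by
  funext i
  simp only [Amat, Matrix.mulVec, dotProduct, castVec, Matrix.map_apply, Matrix.of_apply]
  push_cast
  rfl

lemma detA_ne {a : Fin n → Fin n → ℤ} (hdet : (Matrix.of a).det ≠ 0) : (Amat a).det ≠ 0 := by
  have h : (Amat a).det = ((Matrix.of a).det : ℝ) := by
    rw [show Amat a = (Int.castRingHom ℝ).mapMatrix (Matrix.of a) from rfl,
      ← RingHom.map_det]
    rfl
  rw [h]
  exact_mod_cast hdet

noncomputable def Bmat (a : Fin n → Fin n → ℤ) : Matrix (Fin n) (Fin n) ℝ := (Amat a)⁻¹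

lemma ABv {a : Fin n → Fin n → ℤ} (hdet : (Matrix.of a).det ≠ 0) (v : Fin n → ℝ) :
    (Amat a).mulVec ((Bmat a).mulVec v) = v := by
  rw [Matrix.mulVec_mulVec]
  simp only [Bmat]
  rw [Matrix.mul_nonsing_inv _ (isUnit_iff_ne_zero.mpr (detA_ne hdet)), Matrix.one_mulVec]

lemma BAv {a : Fin n → Fin n → ℤ} (hdet : (Matrix.of a).det ≠ 0) (v : Fin n → ℝ) :
    (Bmat a).mulVec ((Amat a).mulVec v) = v := by
  rw [Matrix.mulVec_mulVec]
  simp only [Bmat]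
  rw [Matrix.nonsing_inv_mul _ (isUnit_iff_ne_zero.mpr (detA_ne hdet)), Matrix.one_mulVec]

lemma theta_q' {a : Fin n → Fin n → ℤ} (v : Fin n → ℝ) :
    (fun i => theta (a i) (q v)) = q ((Amat a).mulVec v) := by
  funext i
  rw [theta_q]
  rfl

def Ksol (a : Fin n → Fin n → ℤ) : Set (Torus n) := {x | ∀ i, theta (a i) x = 0}

noncomputable def g0 (a : Fin n → Fin n → ℤ) : (Fin n → ℤ) →+ Torus n :=
  AddMonoidHom.mk' (fun u => q ((Bmat a).mulVec (castVec u))) (by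
    intro u v
    show q ((Bmat a).mulVec (castVec (u + v))) = _
    have h1 : castVec (u + v) = castVec u + castVec v := by
      funext i; simp [castVec]
    rw [h1, Matrix.mulVec_add, q_add])

lemma range_g0 {a : Fin n → Fin n → ℤ} (hdet : (Matrix.of a).det ≠ 0) :
    Set.range (g0 a) = Ksol a := by
  ext x
  constructor
  · rintro ⟨u, rfl⟩
    intro i
    show theta (a i) (q ((Bmat a).mulVec (castVec u))) = 0
    have h := congrFun (theta_q' (a := a) ((Bmat a).mulVec (castVec u))) i
    rw [h, ABv hdet]
    show ((u i : ℝ) : AddCircle (1:ℝ)) = 0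
    rw [AddCircle.coe_eq_zero_iff]
    exact ⟨u i, by simp⟩
  · intro hx
    obtain ⟨v, rfl⟩ := q_surjective x
    have h0 : q ((Amat a).mulVec v) = 0 := by
      rw [← theta_q']
      funext i
      exact hx i
    obtain ⟨u, hu⟩ := (q_eq_zero_iff _).mp h0
    refine ⟨u, ?_⟩
    show q ((Bmat a).mulVec (castVec u)) = q v
    rw [← hu, BAv hdet]

lemma ker_g0 {a : Fin n → Fin n → ℤ} (hdet : (Matrix.of a).det ≠ 0) :
    (g0 a).ker = (LinearMap.range (Matrix.toLin' (Matrix.of a))).toAddSubgroup := by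
  ext u
  rw [AddMonoidHom.mem_ker]
  show q ((Bmat a).mulVec (castVec u)) = 0 ↔ _
  rw [q_eq_zero_iff]
  constructor
  · rintro ⟨w, hw⟩
    have hcast : castVec u = castVec ((Matrix.of a).mulVec w) := by
      rw [← mulVec_castVec]
      calc castVec u = (Amat a).mulVec ((Bmat a).mulVec (castVec u)) := (ABv hdet _).symm
        _ = (Amat a).mulVec (castVec w) := by rw [hw]
    have h3 : u = (Matrix.of a).mulVec w := by
      funext i
      have h4 := congrFun hcast i
      rw [castVec_apply, castVec_apply] at h4
      exact_mod_cast h4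
    exact Submodule.mem_toAddSubgroup _ |>.mpr ⟨w, by rw [Matrix.toLin'_apply, ← h3]⟩
  · intro hu
    obtain ⟨w, hw⟩ := (Submodule.mem_toAddSubgroup _).mp hu
    rw [Matrix.toLin'_apply] at hw
    refine ⟨w, ?_⟩
    rw [← hw, ← mulVec_castVec, BAv hdet]

lemma toLin'_injective {a : Fin n → Fin n → ℤ} (hdet : (Matrix.of a).det ≠ 0) :
    Function.Injective (Matrix.toLin' (Matrix.of a)) := by
  intro u w h
  rw [Matrix.toLin'_apply, Matrix.toLin'_apply] at h
  have h1 : castVec ((Matrix.of a).mulVec u) = castVec ((Matrix.of a).mulVec w) := by rw [h]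
  rw [← mulVec_castVec, ← mulVec_castVec] at h1
  have h2 : castVec u = castVec w := by
    calc castVec u = (Bmat a).mulVec ((Amat a).mulVec (castVec u)) := (BAv hdet _).symm
      _ = (Bmat a).mulVec ((Amat a).mulVec (castVec w)) := by rw [h1]
      _ = castVec w := BAv hdet _
  funext i
  have h4 := congrFun h2 i
  rw [castVec_apply, castVec_apply] at h4
  exact_mod_cast h4

lemma card_Ksol {a : Fin n → Fin n → ℤ} (hdet : (Matrix.of a).det ≠ 0) :
    Nat.card (Ksol a) = (Matrix.of a).det.natAbs := by
  have h1 : Nat.card (Ksol a) = Nat.card (g0 a).range := by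
    rw [← range_g0 hdet]
    rfl
  rw [h1, Nat.card_congr (QuotientAddGroup.quotientKerEquivRange (g0 a)).toEquiv.symm]
  have h2 : Nat.card ((Fin n → ℤ) ⧸ (g0 a).ker) = (g0 a).ker.index := rfl
  rw [h2, ker_g0 hdet, index_range_eq_natAbs_det _ (toLin'_injective hdet),
    LinearMap.det_toLin']

/-! ### theta basics -/

lemma theta_add (c : Fin n → ℤ) (x y : Torus n) :
    theta c (x + y) = theta c x + theta c y := by
  unfold theta
  rw [← Finset.sum_add_distrib]
  exact Finset.sum_congr rfl fun i _ => by rw [Pi.add_apply, smul_add]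

lemma theta_neg (c : Fin n → ℤ) (x : Torus n) : theta c (-x) = - theta c x := by
  unfold theta
  rw [← Finset.sum_neg_distrib]
  exact Finset.sum_congr rfl fun i _ => by rw [Pi.neg_apply, smul_neg]

lemma theta_sub (c : Fin n → ℤ) (x y : Torus n) :
    theta c (x - y) = theta c x - theta c y := by
  rw [sub_eq_add_neg, theta_add, theta_neg, sub_eq_add_neg]

lemma continuous_theta (c : Fin n → ℤ) : Continuous (theta c) := by
  unfold theta
  exact continuous_finset_sum _ fun i _ => (continuous_apply i).zsmul (c i)

/-! ### the representative map `rep : ℝ/ℤ → [0,1)` -/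

noncomputable def rep (z : AddCircle (1:ℝ)) : ℝ := (AddCircle.equivIco 1 0 z : ℝ)

lemma rep_mem (z : AddCircle (1:ℝ)) : rep z ∈ Ico (0:ℝ) 1 := by
  have h := (AddCircle.equivIco 1 0 z).2
  simpa [rep] using h

lemma rep_coe_of_mem {t : ℝ} (ht : t ∈ Ico (0:ℝ) 1) : rep ((t : ℝ) : AddCircle (1:ℝ)) = t := by
  unfold rep
  rw [AddCircle.coe_equivIco_mk_apply]
  simp [Int.fract_eq_self.mpr ⟨ht.1, ht.2⟩]

lemma rep_coe (z : AddCircle (1:ℝ)) : ((rep z : ℝ) : AddCircle (1:ℝ)) = z := by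
  obtain ⟨x, rfl⟩ := QuotientAddGroup.mk_surjective z
  unfold rep
  rw [AddCircle.coe_equivIco_mk_apply]
  have h1 : Int.fract (x / 1) * 1 = x - (⌊x⌋ : ℝ) := by
    rw [mul_one, div_one, Int.fract]
  rw [h1]
  show (QuotientAddGroup.mk (x - (⌊x⌋:ℝ)) : AddCircle (1:ℝ)) = _
  rw [QuotientAddGroup.mk_sub]
  have h2 : ((⌊x⌋ : ℝ) : AddCircle (1:ℝ)) = 0 := by
    rw [AddCircle.coe_eq_zero_iff]
    exact ⟨⌊x⌋, by simp⟩
  rw [h2, sub_zero]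

lemma rep_eq_zero_iff {z : AddCircle (1:ℝ)} : rep z = 0 ↔ z = 0 := by
  constructor
  · intro h
    rw [← rep_coe z, h]
    rfl
  · rintro rfl
    have : ((0:ℝ) : AddCircle (1:ℝ)) = 0 := by rfl
    rw [← this, rep_coe_of_mem (by constructor <;> norm_num)]

lemma continuousAt_rep {z : AddCircle (1:ℝ)} (hz : z ≠ 0) : ContinuousAt rep z := by
  refine continuous_subtype_val.continuousAt.comp (AddCircle.continuousAt_equivIco 1 0 ?_)
  intro h
  exact hz (h.trans (by rfl))

lemma coe_Ioo_ne_zero {t : ℝ} (ht : t ∈ Ioo (0:ℝ) 1) : ((t:ℝ) : AddCircle (1:ℝ)) ≠ 0 := by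
  intro h
  obtain ⟨m, hm⟩ := (AddCircle.coe_eq_zero_iff _).mp h
  have hm' : (m : ℝ) = t := by simpa using hm
  have h1 : 0 < m := by exact_mod_cast hm' ▸ ht.1
  have h2 : m < 1 := by exact_mod_cast hm' ▸ ht.2
  omega


/-! ### flats and their components -/

def ES (a : Fin n → Fin n → ℤ) (b : Fin n → AddCircle (1:ℝ)) (S : Finset (Fin n)) :
    Set (Torus n) := {x | ∀ i, (i ∈ S ↔ theta (a i) x = b i)}

lemma ES_disjoint {a : Fin n → Fin n → ℤ} {b : Fin n → AddCircle (1:ℝ)}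
    {S S' : Finset (Fin n)} {x : Torus n} (h : x ∈ ES a b S) (h' : x ∈ ES a b S') : S = S' :=
  Finset.ext fun i => (h i).trans (h' i).symm

noncomputable def evS (a : Fin n → Fin n → ℤ) (b : Fin n → AddCircle (1:ℝ))
    (S : Finset (Fin n)) (x : Torus n) : Fin n → ℝ :=
  fun j => if j ∈ S then 0 else rep (theta (a j) x - b j)

noncomputable def cS (a : Fin n → Fin n → ℤ) (b : Fin n → AddCircle (1:ℝ)) (x₀ : Torus n)
    (S : Finset (Fin n)) (x : Torus n) : Torus n :=
  x - x₀ - q ((Bmat a).mulVec (evS a b S x))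

def fib (a : Fin n → Fin n → ℤ) (b : Fin n → AddCircle (1:ℝ)) (x₀ : Torus n)
    (S : Finset (Fin n)) (κ : Torus n) : Set (Torus n) :=
  {x | x ∈ ES a b S ∧ cS a b x₀ S x = κ}

def DD (S : Finset (Fin n)) : Set (Fin n → ℝ) :=
  univ.pi fun j => if j ∈ S then ({0} : Set ℝ) else Ioo 0 1

noncomputable def psi (a : Fin n → Fin n → ℤ) (x₀ κ : Torus n) (t : Fin n → ℝ) : Torus n :=
  x₀ + κ + q ((Bmat a).mulVec t)

section Fixed

variable {a : Fin n → Fin n → ℤ} {b : Fin n → AddCircle (1:ℝ)} {x₀ : Torus n}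
  (hdet : (Matrix.of a).det ≠ 0) (hx₀ : ∀ i, theta (a i) x₀ = b i)

include hdet in
lemma exists_x0 : ∃ x₀ : Torus n, ∀ i, theta (a i) x₀ = b i := by
  choose w hw using fun i => QuotientAddGroup.mk_surjective (b i)
  refine ⟨q ((Bmat a).mulVec w), fun i => ?_⟩
  have h := congrFun (theta_q' (a := a) ((Bmat a).mulVec w)) i
  rw [h, ABv hdet]
  exact hw i

include hdet hx₀

lemma theta_psi {κ : Torus n} (hκ : κ ∈ Ksol a) (t : Fin n → ℝ) (i : Fin n) :
    theta (a i) (psi a x₀ κ t) = b i + ((t i : ℝ) : AddCircle (1:ℝ)) := by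
  unfold psi
  rw [theta_add, theta_add, hx₀ i, hκ i, add_zero]
  congr 1
  have h := congrFun (theta_q' (a := a) ((Bmat a).mulVec t)) i
  rw [h, ABv hdet]
  rfl

lemma psi_mem_ES {κ : Torus n} (hκ : κ ∈ Ksol a) {t : Fin n → ℝ} (ht : t ∈ DD S) :
    psi a x₀ κ t ∈ ES a b S := by
  intro i
  rw [theta_psi hdet hx₀ hκ]
  by_cases hi : i ∈ S
  · have h0 : t i = 0 := by
      have := ht i (mem_univ i)
      simpa [hi] using this
    simp [hi, h0, show (((0:ℝ)) : AddCircle (1:ℝ)) = 0 from rfl]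
  · have h1 : t i ∈ Ioo (0:ℝ) 1 := by
      have := ht i (mem_univ i)
      simpa [hi] using this
    simp only [hi, false_iff]
    intro hcontra
    exact coe_Ioo_ne_zero h1 (by rwa [add_eq_left] at hcontra)

lemma evS_psi {κ : Torus n} (hκ : κ ∈ Ksol a) {t : Fin n → ℝ} (ht : t ∈ DD S) :
    evS a b S (psi a x₀ κ t) = t := by
  funext j
  unfold evS
  by_cases hj : j ∈ S
  · have h0 : t j = 0 := by
      have := ht j (mem_univ j)
      simpa [hj] using this
    simp [hj, h0]
  · have h1 : t j ∈ Ioo (0:ℝ) 1 := by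
      have := ht j (mem_univ j)
      simpa [hj] using this
    rw [if_neg hj, theta_psi hdet hx₀ hκ, add_sub_cancel_left,
      rep_coe_of_mem (Ioo_subset_Ico_self h1)]

lemma cS_psi {κ : Torus n} (hκ : κ ∈ Ksol a) {t : Fin n → ℝ} (ht : t ∈ DD S) :
    cS a b x₀ S (psi a x₀ κ t) = κ := by
  unfold cS
  rw [evS_psi hdet hx₀ hκ ht]
  unfold psi
  abel

lemma fib_eq_image {κ : Torus n} (hκ : κ ∈ Ksol a) (S : Finset (Fin n)) :
    fib a b x₀ S κ = psi a x₀ κ '' DD S := by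
  ext x
  constructor
  · rintro ⟨hES, hc⟩
    refine ⟨evS a b S x, ?_, ?_⟩
    · intro j _
      by_cases hj : j ∈ S
      · simp [evS, hj]
      · have hne : theta (a j) x - b j ≠ 0 := by
          intro h0
          exact hj ((hES j).mpr (by rwa [sub_eq_zero] at h0))
        have hmem := rep_mem (theta (a j) x - b j)
        have hne0 : rep (theta (a j) x - b j) ≠ 0 := fun h => hne (rep_eq_zero_iff.mp h)
        simp only [evS, if_neg hj, hj, if_false]
        exact ⟨lt_of_le_of_ne hmem.1 (Ne.symm hne0), hmem.2⟩
    · unfold cS at hc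
      unfold psi
      rw [← hc]
      abel
  · rintro ⟨t, ht, rfl⟩
    exact ⟨psi_mem_ES hdet hx₀ hκ ht, cS_psi hdet hx₀ hκ ht⟩

omit hdet hx₀ in
lemma DD_nonempty (S : Finset (Fin n)) : (DD S).Nonempty := by
  refine ⟨fun j => if j ∈ S then 0 else 1/2, fun j _ => ?_⟩
  by_cases hj : j ∈ S <;> simp [hj] <;> norm_num

omit hdet hx₀ in
lemma DD_convex (S : Finset (Fin n)) : Convex ℝ (DD S) := by
  refine convex_pi fun j _ => ?_
  by_cases hj : j ∈ S
  · simp only [hj, if_true]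
    exact convex_singleton 0
  · simp only [hj, if_false]
    exact convex_Ioo 0 1

omit hdet hx₀ in
lemma continuous_psi (κ : Torus n) : Continuous (psi a x₀ κ) := by
  unfold psi
  refine continuous_const.add (continuous_q.comp ?_)
  refine continuous_pi fun i => ?_
  unfold Matrix.mulVec dotProduct
  exact continuous_finset_sum _ fun j _ => continuous_const.mul (continuous_apply j)

lemma fib_isPreconnected {κ : Torus n} (hκ : κ ∈ Ksol a) (S : Finset (Fin n)) :
    IsPreconnected (fib a b x₀ S κ) := by
  rw [fib_eq_image hdet hx₀ hκ]
  exact ((DD_convex S).isPreconnected).image _ (continuous_psi κ).continuousOn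

lemma fib_nonempty {κ : Torus n} (hκ : κ ∈ Ksol a) (S : Finset (Fin n)) :
    (fib a b x₀ S κ).Nonempty := by
  rw [fib_eq_image hdet hx₀ hκ]
  exact (DD_nonempty S).image _

lemma cS_mem_Ksol {S : Finset (Fin n)} {x : Torus n} (hx : x ∈ ES a b S) :
    cS a b x₀ S x ∈ Ksol a := by
  intro i
  unfold cS
  rw [theta_sub, theta_sub, hx₀ i]
  have h := congrFun (theta_q' (a := a) ((Bmat a).mulVec (evS a b S x))) i
  rw [h, ABv hdet]
  show theta (a i) x - b i - ((evS a b S x i : ℝ) : AddCircle (1:ℝ)) = 0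
  by_cases hi : i ∈ S
  · rw [show evS a b S x i = 0 from if_pos hi, (hx i).mp hi]
    simp [show (((0:ℝ)) : AddCircle (1:ℝ)) = 0 from rfl]
  · rw [show evS a b S x i = rep (theta (a i) x - b i) from if_neg hi, rep_coe, sub_self]

omit hdet hx₀ in
lemma continuousOn_cS (S : Finset (Fin n)) : ContinuousOn (cS a b x₀ S) (ES a b S) := by
  unfold cS
  have hBcont : Continuous (fun v : Fin n → ℝ => q ((Bmat a).mulVec v)) := by
    refine continuous_q.comp ?_
    refine continuous_pi fun i => ?_
    unfold Matrix.mulVec dotProduct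
    exact continuous_finset_sum _ fun j _ => continuous_const.mul (continuous_apply j)
  have hev : ContinuousOn (evS a b S) (ES a b S) := by
    rw [continuousOn_pi]
    intro j
    by_cases hj : j ∈ S
    · simpa [evS, hj] using continuousOn_const
    · have : (fun x => evS a b S x j) = (fun x => rep (theta (a j) x - b j)) := by
        funext x; simp [evS, hj]
      rw [this]
      intro x hx
      have hne : theta (a j) x - b j ≠ 0 := by
        intro h0
        exact hj ((hx j).mpr (by rwa [sub_eq_zero] at h0))
      have hg : ContinuousAt (fun y => theta (a j) y - b j) x :=
        ((continuous_theta (a j)).sub continuous_const).continuousAt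
      exact (ContinuousAt.comp (g := rep) (f := fun y => theta (a j) y - b j) (x := x)
        (continuousAt_rep hne) hg).continuousWithinAt
  exact (continuousOn_id.sub continuousOn_const).sub (hBcont.comp_continuousOn hev)


omit hdet hx₀

include hdet in
lemma Ksol_finite : (Ksol a).Finite := by
  have h := card_Ksol hdet
  have hne : Nat.card (Ksol a) ≠ 0 := by
    rw [h]; exact Int.natAbs_ne_zero.mpr hdet
  exact Set.finite_coe_iff.mp (Nat.card_ne_zero.mp hne).2

include hdet hx₀

lemma exists_open (S : Finset (Fin n)) (y : Torus n) :
    ∃ O : Set (Torus n), IsOpen O ∧ (y ∈ ES a b S →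
      y ∈ O ∧ ES a b S ∩ O ⊆ fib a b x₀ S (cS a b x₀ S y)) := by
  by_cases hy : y ∈ ES a b S
  · have hVo : IsOpen ((Ksol a \ {cS a b x₀ S y})ᶜ) :=
      isOpen_compl_iff.mpr ((Ksol_finite hdet).diff).isClosed
    have hmem : cS a b x₀ S y ∈ (Ksol a \ {cS a b x₀ S y})ᶜ := fun h => h.2 rfl
    have hnhds : (Ksol a \ {cS a b x₀ S y})ᶜ ∈ nhds (cS a b x₀ S y) := hVo.mem_nhds hmem
    have hcw : cS a b x₀ S ⁻¹' (Ksol a \ {cS a b x₀ S y})ᶜ ∈ nhdsWithin y (ES a b S) :=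
      (continuousOn_cS S y hy) hnhds
    rw [mem_nhdsWithin] at hcw
    obtain ⟨O, hO, hyO, hsub⟩ := hcw
    refine ⟨O, hO, fun _ => ⟨hyO, ?_⟩⟩
    rintro z ⟨hzES, hzO⟩
    have h1 : cS a b x₀ S z ∈ (Ksol a \ {cS a b x₀ S y})ᶜ := hsub ⟨hzO, hzES⟩
    have h2 : cS a b x₀ S z ∈ Ksol a := cS_mem_Ksol hdet hx₀ hzES
    have h3 : cS a b x₀ S z = cS a b x₀ S y := by
      by_contra hne; exact h1 ⟨h2, hne⟩
    exact ⟨hzES, h3⟩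
  · exact ⟨∅, isOpen_empty, fun h => absurd h hy⟩

lemma connectedComponentIn_ES {S : Finset (Fin n)} {x : Torus n} (hx : x ∈ ES a b S) :
    connectedComponentIn (ES a b S) x = fib a b x₀ S (cS a b x₀ S x) := by
  apply Subset.antisymm
  · set C := connectedComponentIn (ES a b S) x with hC
    have hCpre : IsPreconnected C := isPreconnected_connectedComponentIn
    have hCsub : C ⊆ ES a b S := connectedComponentIn_subset _ _
    have hxC : x ∈ C := mem_connectedComponentIn hx
    intro z hzC
    refine ⟨hCsub hzC, ?_⟩
    by_contra hne
    choose O hOopen hOspec using exists_open hdet hx₀ S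
    set U := ⋃ y ∈ {y | y ∈ ES a b S ∧ cS a b x₀ S y = cS a b x₀ S x}, O y with hU
    set W := ⋃ y ∈ {y | y ∈ ES a b S ∧ cS a b x₀ S y ≠ cS a b x₀ S x}, O y with hW
    have hUopen : IsOpen U := isOpen_biUnion fun y _ => hOopen y
    have hWopen : IsOpen W := isOpen_biUnion fun y _ => hOopen y
    have hCUW : C ⊆ U ∪ W := by
      intro w hw
      have hwES := hCsub hw
      by_cases hcw : cS a b x₀ S w = cS a b x₀ S x
      · exact Or.inl (mem_biUnion ⟨hwES, hcw⟩ (hOspec w hwES).1)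
      · exact Or.inr (mem_biUnion ⟨hwES, hcw⟩ (hOspec w hwES).1)
    have hxU : x ∈ C ∩ U := ⟨hxC, mem_biUnion ⟨hx, rfl⟩ (hOspec x hx).1⟩
    have hzW : z ∈ C ∩ W := ⟨hzC, mem_biUnion ⟨hCsub hzC, hne⟩ (hOspec z (hCsub hzC)).1⟩
    obtain ⟨w, hwC, hwU, hwW⟩ := hCpre U W hUopen hWopen hCUW ⟨x, hxU⟩ ⟨z, hzW⟩
    have hwES := hCsub hwC
    obtain ⟨y₁, hy₁, hwO₁⟩ := mem_iUnion₂.mp hwU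
    obtain ⟨y₂, hy₂, hwO₂⟩ := mem_iUnion₂.mp hwW
    have e1 : cS a b x₀ S w = cS a b x₀ S y₁ := ((hOspec y₁ hy₁.1).2 ⟨hwES, hwO₁⟩).2
    have e2 : cS a b x₀ S w = cS a b x₀ S y₂ := ((hOspec y₂ hy₂.1).2 ⟨hwES, hwO₂⟩).2
    exact hy₂.2 (e2.symm.trans (e1.trans hy₁.2))
  · exact IsPreconnected.subset_connectedComponentIn
      (fib_isPreconnected hdet hx₀ (cS_mem_Ksol hdet hx₀ hx) S) ⟨hx, rfl⟩ (fun z hz => hz.1)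

lemma comps_ES (S : Finset (Fin n)) :
    comps (ES a b S) = Set.range (fun κ : ↥(Ksol a) => fib a b x₀ S ↑κ) := by
  ext C
  constructor
  · rintro ⟨x, hx, rfl⟩
    exact ⟨⟨cS a b x₀ S x, cS_mem_Ksol hdet hx₀ hx⟩, (connectedComponentIn_ES hdet hx₀ hx).symm⟩
  · rintro ⟨⟨κ, hκ⟩, rfl⟩
    obtain ⟨x, hxfib⟩ := fib_nonempty hdet hx₀ hκ S
    exact ⟨x, hxfib.1, by rw [connectedComponentIn_ES hdet hx₀ hxfib.1, hxfib.2]⟩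

end Fixed


open Classical in
noncomputable def Nset (a : Fin n → Fin n → ℤ) (b : Fin n → AddCircle (1:ℝ)) (x : Torus n) :
    Finset (Fin n) := Finset.univ.filter (fun i => theta (a i) x = b i)

lemma mem_Nset {a : Fin n → Fin n → ℤ} {b : Fin n → AddCircle (1:ℝ)} {x : Torus n} {i : Fin n} :
    i ∈ Nset a b x ↔ theta (a i) x = b i := by
  classical
  simp [Nset]

lemma mem_ES_iff_Nset {a : Fin n → Fin n → ℤ} {b : Fin n → AddCircle (1:ℝ)} {x : Torus n}
    {S : Finset (Fin n)} : x ∈ ES a b S ↔ Nset a b x = S := by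
  constructor
  · intro h
    exact Finset.ext fun i => mem_Nset.trans (h i).symm
  · rintro rfl
    exact fun i => mem_Nset

lemma mem_comps_iff {X : Type*} [TopologicalSpace X] {A : Set X} {x : X} :
    (∃ C ∈ comps A, x ∈ C) ↔ x ∈ A := by
  constructor
  · rintro ⟨C, ⟨y, hy, rfl⟩, hxC⟩
    exact connectedComponentIn_subset _ _ hxC
  · intro hx
    exact ⟨connectedComponentIn A x, ⟨x, hx, rfl⟩, mem_connectedComponentIn hx⟩

lemma Nset_card_le {a : Fin n → Fin n → ℤ} {b : Fin n → AddCircle (1:ℝ)} (x : Torus n) :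
    (Nset a b x).card ≤ n := by
  have := Finset.card_le_univ (Nset a b x)
  simpa using this

lemma SigIn_structure (a : Fin n → Fin n → ℤ) (b : Fin n → AddCircle (1:ℝ)) :
    ∀ k, k ≤ n →
      SigIn (univ : Set (Torus n)) n (fun i => Hyp (a i) (b i)) k
        = ⋃ S ∈ {S : Finset (Fin n) | S.card = n - k}, comps (ES a b S) := by
  intro k
  induction k using Nat.strong_induction_on with
  | _ k ih =>
    intro hk
    rw [SigIn_eq]
    by_cases hk0 : k = 0
    · subst hk0
      rw [if_pos rfl]
      have hset : {S : Finset (Fin n) | S.card = n} = {Finset.univ} := by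
        ext S
        simp only [mem_setOf_eq, mem_singleton_iff]
        rw [← Finset.card_eq_iff_eq_univ, Fintype.card_fin]
      have hset0 : {S : Finset (Fin n) | S.card = n - 0} = {Finset.univ} := by
        rw [← hset]
        simp
      have h1 : (⋃ S ∈ {S : Finset (Fin n) | S.card = n}, ⋂ i ∈ S, Hyp (a i) (b i))
          = ES a b Finset.univ := by
        rw [hset, biUnion_singleton]
        ext x
        simp only [mem_iInter, mem_setOf_eq, Hyp, ES]
        exact ⟨fun h i => ⟨fun _ => h i (Finset.mem_univ i), fun _ => Finset.mem_univ i⟩,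
          fun h i _ => (h i).mp (Finset.mem_univ i)⟩
      rw [h1, hset0, biUnion_singleton]
    · rw [if_neg hk0]
      by_cases hkn : k = n
      · rw [if_pos hkn]
        have hset : {S : Finset (Fin n) | S.card = n - k} = {(∅ : Finset (Fin n))} := by
          ext S
          simp [hkn, Nat.sub_self, Finset.card_eq_zero]
        have h2 : ((univ : Set (Torus n)) \ ⋃ i, Hyp (a i) (b i)) = ES a b ∅ := by
          ext x
          simp only [mem_diff, mem_univ, true_and, mem_iUnion, not_exists, ES, mem_setOf_eq,
            Hyp, Finset.notMem_empty, false_iff]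
        rw [hset, biUnion_singleton, h2]
      · rw [if_neg hkn]
        have hkn' : k < n := lt_of_le_of_ne hk hkn
        have hlow : (⋃ j : Fin k, ⋃ σ ∈ SigIn (univ : Set (Torus n)) n
              (fun i => Hyp (a i) (b i)) j.1, σ)
            = {x : Torus n | n - k < (Nset a b x).card} := by
          ext x
          simp only [mem_iUnion, exists_prop, mem_setOf_eq]
          constructor
          · rintro ⟨j, σ, hσ, hxσ⟩
            rw [ih j.1 j.2 (le_trans j.2.le hk)] at hσ
            obtain ⟨S, hS, hσ'⟩ := mem_iUnion₂.mp hσ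
            have hxA : x ∈ ES a b S := by
              obtain ⟨y, hy, rfl⟩ := hσ'
              exact connectedComponentIn_subset _ _ hxσ
            have hNx : Nset a b x = S := mem_ES_iff_Nset.mp hxA
            have hj2 : j.1 < k := j.2
            rw [hNx, hS]
            omega
          · intro hcard
            have hcle := Nset_card_le (a := a) (b := b) x
            set j := n - (Nset a b x).card with hj
            have hjk : j < k := by omega
            refine ⟨⟨j, hjk⟩, ?_⟩
            rw [ih j hjk (by omega)]
            refine ⟨connectedComponentIn (ES a b (Nset a b x)) x, ?_,
              mem_connectedComponentIn (mem_ES_iff_Nset.mpr rfl)⟩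
            refine mem_iUnion₂.mpr ⟨Nset a b x, ?_, ⟨x, mem_ES_iff_Nset.mpr rfl, rfl⟩⟩
            show (Nset a b x).card = n - j
            omega
        rw [hlow]
        refine iUnion₂_congr fun S hS => ?_
        have hSc : S.card = n - k := hS
        have hdiff : ((⋂ i ∈ S, Hyp (a i) (b i)) \ {x : Torus n | n - k < (Nset a b x).card})
            = ES a b S := by
          ext x
          simp only [mem_diff, mem_iInter, mem_setOf_eq, Hyp, not_lt]
          constructor
          · rintro ⟨hall, hnot⟩
            have hsub : S ⊆ Nset a b x := fun i hi => mem_Nset.mpr (hall i hi)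
            have hEq : S = Nset a b x :=
              Finset.eq_of_subset_of_card_le hsub (by omega)
            exact mem_ES_iff_Nset.mpr hEq.symm
          · intro hES
            have hNx : Nset a b x = S := mem_ES_iff_Nset.mp hES
            exact ⟨fun i hi => (hES i).mp hi, by rw [hNx]; omega⟩
        rw [hdiff]

end CFNH

open CFNH in
/-- For an arrangement of exactly `n` toric hyperplanes on `Tⁿ` whose system of normal
vectors `Θ` has nonzero determinant, the number of `k`-flats is `|det Θ| * C(n,k)`. -/
theorem card_flats_of_n_hyperplanes {n : ℕ}
    (a : Fin n → Fin n → ℤ) (b : Fin n → AddCircle (1 : ℝ))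
    (hdet : (Matrix.of a).det ≠ 0) :
    ∀ k ≤ n,
      Nat.card ↥(SigIn Set.univ n (fun i => Hyp (a i) (b i)) k) =
        (Matrix.of a).det.natAbs * n.choose k := by
  intro k hk
  classical
  obtain ⟨x₀, hx₀⟩ := exists_x0 (b := b) hdet
  rw [SigIn_structure a b k hk]
  set g : {S : Finset (Fin n) // S.card = n - k} × ↥(Ksol a) → Set (Torus n) :=
    fun p => fib a b x₀ p.1.1 p.2.1 with hg
  have hrange : (⋃ S ∈ {S : Finset (Fin n) | S.card = n - k}, comps (ES a b S))
      = Set.range g := by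
    ext C
    simp only [mem_iUnion, exists_prop, mem_range, mem_setOf_eq]
    constructor
    · rintro ⟨S, hS, hC⟩
      rw [comps_ES hdet hx₀ S] at hC
      obtain ⟨κ, hκ⟩ := hC
      exact ⟨(⟨S, hS⟩, κ), hκ⟩
    · rintro ⟨⟨⟨S, hS⟩, κ⟩, rfl⟩
      exact ⟨S, hS, by rw [comps_ES hdet hx₀ S]; exact ⟨κ, rfl⟩⟩
  rw [hrange]
  have hginj : Function.Injective g := by
    rintro ⟨⟨S, hS⟩, ⟨κ, hκ⟩⟩ ⟨⟨S', hS'⟩, ⟨κ', hκ'⟩⟩ hEq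
    obtain ⟨x, hx⟩ := fib_nonempty hdet hx₀ hκ S
    have hx' : x ∈ fib a b x₀ S' κ' := by
      have : x ∈ g (⟨S', hS'⟩, ⟨κ', hκ'⟩) := hEq ▸ hx
      exact this
    have hSS : S = S' := ES_disjoint hx.1 hx'.1
    subst hSS
    have hκκ : κ = κ' := hx.2.symm.trans hx'.2
    subst hκκ
    rfl
  rw [Nat.card_range_of_injective hginj, Nat.card_prod, Nat.card_eq_fintype_card,
    Fintype.card_finset_len, Fintype.card_fin, Nat.choose_symm hk, card_Ksol hdet, mul_comm]
end

section
/- Let A = {H₁,…,Hₙ} be a toric hyperplane arrangement on Tⁿ consisting of exactly n hyperplanes Hᵢ = θ_{aᵢ}⁻¹(bᵢ), and let Θ be the n × n integer matrix whose i-th row is aᵢ; assume det Θ ≠ 0. Then the complement Tⁿ \ (H₁ ∪ ⋯ ∪ Hₙ) has exactly |det Θ| connected components. -/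
open Set

lemma toLin'_int_injective {n : ℕ} (A : Matrix (Fin n) (Fin n) ℤ) (hA : A.det ≠ 0) :
    Function.Injective (Matrix.toLin' A) := by
  rw [← LinearMap.ker_eq_bot, LinearMap.ker_eq_bot']
  intro v hv
  have h : A.adjugate.mulVec (A.mulVec v) = A.det • v := by
    rw [Matrix.mulVec_mulVec, Matrix.adjugate_mul, Matrix.smul_mulVec, Matrix.one_mulVec]
  rw [Matrix.toLin'_apply] at hv
  rw [hv, Matrix.mulVec_zero] at h
  exact smul_right_injective (Fin n → ℤ) hA (h.symm.trans (smul_zero _).symm)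

lemma index_range_toLin' {n : ℕ} (A : Matrix (Fin n) (Fin n) ℤ) (hA : A.det ≠ 0) :
    (LinearMap.range (Matrix.toLin' A)).toAddSubgroup.index = A.det.natAbs := by
  classical
  set N := LinearMap.range (Matrix.toLin' A) with hN
  obtain ⟨m, snf⟩ := N.smithNormalForm (Pi.basisFun ℤ (Fin n))
  let e' : (Fin n → ℤ) ≃ₗ[ℤ] N :=
    LinearEquiv.ofInjective (Matrix.toLin' A) (toLin'_int_injective A hA)
  have hm : m = n := by
    have hc := card_eq_of_linearEquiv ℤ (snf.bN.equivFun.symm.trans (e'.symm))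
    simpa using hc
  subst hm
  rw [snf.toAddSubgroup_index_eq_ite]
  rw [if_pos (by simp)]
  have hprod : ∀ i : Fin m, (Ideal.span {snf.a i}).toAddSubgroup.index = (snf.a i).natAbs := by
    intro i
    rw [Ideal.span_singleton_toAddSubgroup_eq_zmultiples, Int.index_zmultiples]
  simp_rw [hprod]
  -- now: ∏ i, (snf.a i).natAbs = A.det.natAbs
  have hσb : Function.Bijective snf.f :=
    (Fintype.bijective_iff_injective_and_card snf.f).mpr ⟨snf.f.injective, rfl⟩
  set σ : Equiv.Perm (Fin m) := Equiv.ofBijective snf.f hσb with hσ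
  have hdet1 : snf.bM.det (N.subtype ∘ snf.bN) =
      LinearMap.det (N.subtype ∘ₗ (snf.bM.equiv snf.bN (Equiv.refl _) : (Fin m → ℤ) →ₗ[ℤ] N)) :=
    Module.Basis.det_comp_basis _ _ _
  have hassoc : Associated
      (LinearMap.det (N.subtype ∘ₗ (snf.bM.equiv snf.bN (Equiv.refl _) : (Fin m → ℤ) →ₗ[ℤ] N)))
      (LinearMap.det (N.subtype ∘ₗ (e' : (Fin m → ℤ) →ₗ[ℤ] N))) :=
    LinearMap.associated_det_comp_equiv _ _ _
  have hAdet : LinearMap.det (N.subtype ∘ₗ (e' : (Fin m → ℤ) →ₗ[ℤ] N)) = A.det := by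
    rw [← LinearMap.det_toLin' A]
    congr 1
  -- compute snf.bM.det (N.subtype ∘ snf.bN)
  have hmat : snf.bM.toMatrix (N.subtype ∘ snf.bN) =
      (Matrix.diagonal (snf.a ∘ σ.symm)).submatrix id σ := by
    ext i j
    rw [Module.Basis.toMatrix_apply]
    simp only [Function.comp_apply, Submodule.coe_subtype, snf.snf j, map_smul,
      Module.Basis.repr_self, Matrix.submatrix_apply, id_eq, Matrix.diagonal_apply]
    rw [Finsupp.smul_single, smul_eq_mul, mul_one]
    have hfj : σ j = snf.f j := rfl
    by_cases h : i = σ j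
    · subst h
      rw [hfj, Finsupp.single_eq_same, if_pos rfl, ← hfj, Equiv.symm_apply_apply]
    · rw [if_neg h, Finsupp.single_eq_of_ne' (by rw [← hfj]; exact fun hc => h hc.symm)]
  have hdet2 : (snf.bM.det (N.subtype ∘ snf.bN)).natAbs = ∏ i, (snf.a i).natAbs := by
    rw [Module.Basis.det_apply, hmat]
    rw [Matrix.det_permute' σ, Matrix.det_diagonal, Int.natAbs_mul]
    have hfin : (∏ x, snf.a (σ.symm x)).natAbs = ∏ i, (snf.a i).natAbs := by
      rw [Equiv.prod_comp σ.symm snf.a]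
      exact map_prod Int.natAbsHom _ _
    rcases Int.units_eq_one_or (Equiv.Perm.sign σ) with h | h <;>
      rw [h] <;> simpa using hfin
  have key := Int.natAbs_eq_iff_associated.mpr hassoc
  rw [hAdet] at key
  rw [← hdet2, hdet1, key]

namespace ToricCount

variable {n : ℕ}

/-- The quotient map `ℝⁿ → Tⁿ`. -/
noncomputable def q (x : Fin n → ℝ) : Torus n := fun i => (x i : AddCircle (1:ℝ))

/-- The real matrix associated to the integer matrix `a`. -/
noncomputable def Ar (a : Fin n → Fin n → ℤ) : Matrix (Fin n) (Fin n) ℝ :=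
  (Matrix.of a).map Int.cast

noncomputable def box (β : Fin n → ℝ) (m : Fin n → ℤ) : Set (Fin n → ℝ) :=
  univ.pi fun i => Ioo (β i + m i) (β i + m i + 1)

noncomputable def Reg (a : Fin n → Fin n → ℤ) (β : Fin n → ℝ) (m : Fin n → ℤ) :
    Set (Torus n) :=
  q '' ((fun x => (Ar a).mulVec x) ⁻¹' box β m)

lemma q_continuous : Continuous (q (n := n)) :=
  continuous_pi fun i => (AddCircle.continuous_mk' 1).comp (continuous_apply i)

lemma q_isOpenMap : IsOpenMap (q (n := n)) := by
  have : (q (n := n)) = Pi.map (fun _ : Fin n => ((↑) : ℝ → AddCircle (1:ℝ))) := rfl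
  rw [this]
  exact IsOpenMap.piMap (fun i => fun s hs => QuotientAddGroup.isOpenMap_coe s hs)
    (Filter.Eventually.of_forall fun i => QuotientAddGroup.mk_surjective)

lemma q_surjective : Function.Surjective (q (n := n)) := by
  intro y
  have : ∀ i, ∃ r : ℝ, (r : AddCircle (1:ℝ)) = y i := fun i =>
    QuotientAddGroup.mk_surjective (y i)
  choose x hx using this
  exact ⟨x, funext hx⟩

lemma coe_eq_coe_iff (x y : ℝ) : (↑x = (↑y : AddCircle (1:ℝ))) ↔ ∃ k : ℤ, x - y = k := by
  rw [show ((↑x : AddCircle (1:ℝ)) = ↑y) ↔ x - y ∈ AddSubgroup.zmultiples (1:ℝ) from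
    QuotientAddGroup.eq_iff_sub_mem]
  rw [AddSubgroup.mem_zmultiples_iff]
  simp [eq_comm]

lemma q_eq_iff (x x' : Fin n → ℝ) : q x = q x' ↔ ∀ i, ∃ k : ℤ, x i - x' i = k := by
  constructor
  · intro h i
    have := congrFun h i
    exact (coe_eq_coe_iff _ _).mp this
  · intro h
    funext i
    exact (coe_eq_coe_iff _ _).mpr (h i)

lemma theta_q (a : Fin n → Fin n → ℤ) (i : Fin n) (x : Fin n → ℝ) :
    theta (a i) (q x) = (((Ar a).mulVec x i : ℝ) : AddCircle (1:ℝ)) := by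
  unfold theta q Ar
  have h1 : ∀ j, (a i j) • ((x j : ℝ) : AddCircle (1:ℝ))
      = (((a i j : ℝ) * x j : ℝ) : AddCircle (1:ℝ)) := by
    intro j
    rw [← AddCircle.coe_zsmul, zsmul_eq_mul]
  simp_rw [h1]
  have h2 : (∑ j, (((a i j : ℝ) * x j : ℝ) : AddCircle (1:ℝ)))
      = ((∑ j, (a i j : ℝ) * x j : ℝ) : AddCircle (1:ℝ)) := by
    exact (map_sum (QuotientAddGroup.mk' (AddSubgroup.zmultiples (1:ℝ)))
      (fun j => (a i j : ℝ) * x j) Finset.univ).symm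
  rw [h2]
  congr 1


lemma mem_Reg (a : Fin n → Fin n → ℤ) (β : Fin n → ℝ) (m : Fin n → ℤ) (y : Torus n) :
    y ∈ Reg a β m ↔ ∃ x, q x = y ∧
      ∀ i, (Ar a).mulVec x i ∈ Ioo (β i + m i) (β i + m i + 1) := by
  simp only [Reg, mem_image, mem_preimage, box, mem_univ_pi]
  tauto

lemma cast_mulVec (a : Fin n → Fin n → ℤ) (k : Fin n → ℤ) :
    (Ar a).mulVec (fun i => (k i : ℝ)) = fun i => (((Matrix.of a).mulVec k i : ℤ) : ℝ) := by
  ext i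
  simp [Ar, Matrix.mulVec, dotProduct]

lemma Reg_isOpen (a : Fin n → Fin n → ℤ) (β : Fin n → ℝ) (m : Fin n → ℤ) :
    IsOpen (Reg a β m) := by
  apply q_isOpenMap
  apply IsOpen.preimage
  · exact (LinearMap.continuous_of_finiteDimensional (Matrix.toLin' (Ar a))).congr
      (by simp [Matrix.toLin'_apply])
  · exact isOpen_set_pi finite_univ fun i _ => isOpen_Ioo

lemma Reg_preconnected (a : Fin n → Fin n → ℤ) (β : Fin n → ℝ) (m : Fin n → ℤ) :
    IsPreconnected (Reg a β m) := by
  apply IsPreconnected.image _ _ q_continuous.continuousOn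
  apply Convex.isPreconnected
  have : Convex ℝ (box β m : Set (Fin n → ℝ)) :=
    convex_pi fun i _ => convex_Ioo _ _
  exact this.linear_preimage (Matrix.toLin' (Ar a))

lemma Reg_nonempty (a : Fin n → Fin n → ℤ) (β : Fin n → ℝ) (m : Fin n → ℤ)
    (hdet : (Matrix.of a).det ≠ 0) : (Reg a β m).Nonempty := by
  have hAr : (Ar a).det ≠ 0 := by
    have : (Ar a).det = ((Matrix.of a).det : ℝ) := (RingHom.map_det (Int.castRingHom ℝ) _).symm
    rw [this]
    exact_mod_cast hdet
  obtain ⟨x, hx⟩ : ∃ x, (Ar a).mulVec x = fun i => β i + m i + 1/2 := by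
    refine ⟨(Ar a)⁻¹.mulVec (fun i => β i + m i + 1/2), ?_⟩
    rw [Matrix.mulVec_mulVec, Matrix.mul_nonsing_inv _ (isUnit_iff_ne_zero.mpr hAr),
      Matrix.one_mulVec]
  refine ⟨q x, (mem_Reg _ _ _ _).mpr ⟨x, rfl, fun i => ?_⟩⟩
  rw [hx]
  constructor <;> simp <;> linarith

lemma Reg_shift (a : Fin n → Fin n → ℤ) (β : Fin n → ℝ) (m k : Fin n → ℤ) :
    Reg a β (m + (Matrix.of a).mulVec k) = Reg a β m := by
  have hmv : ∀ x : Fin n → ℝ, (Ar a).mulVec (x + fun i => (k i : ℝ))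
      = (Ar a).mulVec x + fun i => (((Matrix.of a).mulVec k i : ℤ) : ℝ) := by
    intro x
    rw [Matrix.mulVec_add, cast_mulVec]
  ext y
  simp only [mem_Reg]
  constructor
  · rintro ⟨x, rfl, hx⟩
    refine ⟨x - fun i => (k i : ℝ), ?_, fun i => ?_⟩
    · exact (q_eq_iff _ _).mpr fun i => ⟨-(k i), by simp only [Pi.sub_apply]; push_cast; ring⟩
    · have h1 := hx i
      have h2 : (Ar a).mulVec (x - fun i => (k i : ℝ)) i
          = (Ar a).mulVec x i - (((Matrix.of a).mulVec k i : ℤ) : ℝ) := by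
        have := hmv (x - fun i => (k i : ℝ))
        have h3 : (x - fun i => (k i : ℝ)) + (fun i => (k i : ℝ)) = x := by ext j; simp
        rw [h3] at this
        have := congrFun this i
        simp only [Pi.add_apply] at this
        linarith
      simp only [mem_Ioo] at h1 ⊢
      rw [h2]
      obtain ⟨hl, hr⟩ := h1
      simp only [Pi.add_apply, Int.cast_add] at hl hr
      constructor <;> push_cast at hl hr ⊢ <;> linarith
  · rintro ⟨x, rfl, hx⟩
    refine ⟨x + fun i => (k i : ℝ), ?_, fun i => ?_⟩
    · exact (q_eq_iff _ _).mpr fun i => ⟨k i, by simp only [Pi.add_apply]; push_cast; ring⟩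
    · have h1 := hx i
      have h2 := congrFun (hmv x) i
      simp only [Pi.add_apply] at h2
      simp only [mem_Ioo] at h1 ⊢
      rw [h2]
      obtain ⟨hl, hr⟩ := h1
      constructor <;> push_cast <;> simp only [Pi.add_apply] <;> push_cast <;> linarith

lemma Reg_inter (a : Fin n → Fin n → ℤ) (β : Fin n → ℝ) (m m' : Fin n → ℤ)
    (h : (Reg a β m ∩ Reg a β m').Nonempty) :
    ∃ k, m' = m + (Matrix.of a).mulVec k := by
  obtain ⟨y, hy1, hy2⟩ := h
  obtain ⟨x, hqx, hx⟩ := (mem_Reg _ _ _ _).mp hy1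
  obtain ⟨x', hqx', hx'⟩ := (mem_Reg _ _ _ _).mp hy2
  have hq : q x' = q x := hqx'.trans hqx.symm
  obtain ⟨k, hk⟩ : ∃ k : Fin n → ℤ, x' - x = fun i => (k i : ℝ) := by
    have := (q_eq_iff _ _).mp hq
    choose k hk using this
    exact ⟨k, funext fun i => by simpa using hk i⟩
  have h3 : x + (fun i => (k i : ℝ)) = x' := by
    ext j
    have := congrFun hk j
    simp only [Pi.sub_apply] at this
    simp only [Pi.add_apply]
    linarith
  have hdiff : ∀ i, (Ar a).mulVec x' i - (Ar a).mulVec x i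
      = (((Matrix.of a).mulVec k i : ℤ) : ℝ) := by
    intro i
    have h4 : (Ar a).mulVec x' = (Ar a).mulVec x + fun i => (((Matrix.of a).mulVec k i : ℤ) : ℝ) := by
      rw [← h3, Matrix.mulVec_add, cast_mulVec]
    have := congrFun h4 i
    simp only [Pi.add_apply] at this
    linarith
  refine ⟨k, funext fun i => ?_⟩
  have h1 := hx i
  have h2 := hx' i
  simp only [mem_Ioo] at h1 h2
  have hd := hdiff i
  have hlt1 : (((Matrix.of a).mulVec k i : ℤ) : ℝ) < ((m' i - m i + 1 : ℤ) : ℝ) := by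
    push_cast
    linarith [h1.1, h2.2]
  have hlt2 : ((m' i - m i - 1 : ℤ) : ℝ) < (((Matrix.of a).mulVec k i : ℤ) : ℝ) := by
    push_cast
    linarith [h1.2, h2.1]
  have e1 : (Matrix.of a).mulVec k i < m' i - m i + 1 := by exact_mod_cast hlt1
  have e2 : m' i - m i - 1 < (Matrix.of a).mulVec k i := by exact_mod_cast hlt2
  simp only [Pi.add_apply]
  omega


variable (a : Fin n → Fin n → ℤ) (b : Fin n → AddCircle (1 : ℝ)) (β : Fin n → ℝ)

lemma mem_S_iff (hβ : ∀ i, ((β i : ℝ) : AddCircle (1:ℝ)) = b i) (y : Torus n) :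
    y ∈ (univ \ ⋃ i, Hyp (a i) (b i)) ↔ ∀ i, theta (a i) y ≠ b i := by
  simp [Hyp, mem_diff, mem_iUnion]

lemma Reg_subset (hβ : ∀ i, ((β i : ℝ) : AddCircle (1:ℝ)) = b i) (m : Fin n → ℤ) :
    Reg a β m ⊆ univ \ ⋃ i, Hyp (a i) (b i) := by
  intro y hy
  rw [mem_S_iff a b β hβ]
  obtain ⟨x, rfl, hx⟩ := (mem_Reg _ _ _ _).mp hy
  intro i hcon
  rw [theta_q, ← hβ i] at hcon
  obtain ⟨k, hk⟩ := (coe_eq_coe_iff _ _).mp hcon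
  have h1 := hx i
  simp only [mem_Ioo] at h1
  have hlo : ((m i : ℤ) : ℝ) < (k : ℝ) := by linarith [h1.1]
  have hhi : (k : ℝ) < ((m i + 1 : ℤ) : ℝ) := by push_cast; linarith [h1.2]
  have e1 : (m i : ℤ) < k := by exact_mod_cast hlo
  have e2 : k < m i + 1 := by exact_mod_cast hhi
  omega

lemma S_subset_iUnion (hβ : ∀ i, ((β i : ℝ) : AddCircle (1:ℝ)) = b i) :
    (univ \ ⋃ i, Hyp (a i) (b i)) ⊆ ⋃ m : Fin n → ℤ, Reg a β m := by
  intro y hy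
  rw [mem_S_iff a b β hβ] at hy
  obtain ⟨x, rfl⟩ := q_surjective y
  have hne : ∀ i, ∀ k : ℤ, (Ar a).mulVec x i - β i ≠ k := by
    intro i k hk
    apply hy i
    rw [theta_q, ← hβ i]
    exact (coe_eq_coe_iff _ _).mpr ⟨k, hk⟩
  refine mem_iUnion.mpr ⟨fun i => ⌊(Ar a).mulVec x i - β i⌋, (mem_Reg _ _ _ _).mpr
    ⟨x, rfl, fun i => ?_⟩⟩
  simp only [mem_Ioo]
  constructor
  · have hle : (⌊(Ar a).mulVec x i - β i⌋ : ℝ) ≤ (Ar a).mulVec x i - β i := Int.floor_le _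
    have hne' := hne i ⌊(Ar a).mulVec x i - β i⌋
    have : (⌊(Ar a).mulVec x i - β i⌋ : ℝ) < (Ar a).mulVec x i - β i :=
      lt_of_le_of_ne hle fun h => hne' h.symm
    linarith
  · have := Int.lt_floor_add_one ((Ar a).mulVec x i - β i)
    linarith

lemma connectedComponentIn_eq_Reg (hdet : (Matrix.of a).det ≠ 0)
    (hβ : ∀ i, ((β i : ℝ) : AddCircle (1:ℝ)) = b i) (m : Fin n → ℤ) (y : Torus n)
    (hy : y ∈ Reg a β m) :
    connectedComponentIn (univ \ ⋃ i, Hyp (a i) (b i)) y = Reg a β m := by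
  set S := univ \ ⋃ i, Hyp (a i) (b i) with hS
  have hyS : y ∈ S := Reg_subset a b β hβ m hy
  have hdisj : Disjoint (Reg a β m) (⋃ m' ∈ {m' | Reg a β m' ≠ Reg a β m}, Reg a β m') := by
    rw [disjoint_left]
    intro z hz hz'
    simp only [mem_iUnion, mem_setOf_eq] at hz'
    obtain ⟨m', hne', hz'⟩ := hz'
    obtain ⟨k, hk⟩ := Reg_inter a β m m' ⟨z, hz, hz'⟩
    exact hne' (by rw [hk, Reg_shift])
  apply subset_antisymm
  · refine IsPreconnected.subset_left_of_subset_union (Reg_isOpen a β m)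
      (isOpen_biUnion fun _ _ => Reg_isOpen a β _) hdisj ?_
      ⟨y, mem_connectedComponentIn hyS, hy⟩ isPreconnected_connectedComponentIn
    intro z hz
    have hzS : z ∈ S := connectedComponentIn_subset _ _ hz
    obtain ⟨m'', hz''⟩ := mem_iUnion.mp (S_subset_iUnion a b β hβ hzS)
    by_cases hcase : Reg a β m'' = Reg a β m
    · left; rwa [← hcase]
    · right; exact mem_biUnion hcase hz''
  · exact (Reg_preconnected a β m).subset_connectedComponentIn hy (Reg_subset a b β hβ m)

lemma comps_eq (hdet : (Matrix.of a).det ≠ 0)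
    (hβ : ∀ i, ((β i : ℝ) : AddCircle (1:ℝ)) = b i) :
    comps (univ \ ⋃ i, Hyp (a i) (b i)) = Set.range (Reg a β) := by
  ext C
  constructor
  · rintro ⟨y, hyS, rfl⟩
    obtain ⟨m, hm⟩ := mem_iUnion.mp (S_subset_iUnion a b β hβ hyS)
    exact ⟨m, (connectedComponentIn_eq_Reg a b β hdet hβ m y hm).symm⟩
  · rintro ⟨m, rfl⟩
    obtain ⟨y, hy⟩ := Reg_nonempty a β m hdet
    exact ⟨y, Reg_subset a b β hβ m hy,
      (connectedComponentIn_eq_Reg a b β hdet hβ m y hy).symm⟩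

end ToricCount

open ToricCount

/-- For an arrangement of exactly `n` toric hyperplanes on `Tⁿ` whose system of normal
vectors `Θ` has nonzero determinant, the complement `Tⁿ \ (H₁ ∪ ⋯ ∪ Hₙ)` has exactly
`|det Θ|` connected components. -/
theorem card_regions_of_n_hyperplanes {n : ℕ}
    (a : Fin n → Fin n → ℤ) (b : Fin n → AddCircle (1 : ℝ))
    (hdet : (Matrix.of a).det ≠ 0) :
    Nat.card ↥(comps (Set.univ \ ⋃ i, Hyp (a i) (b i))) = (Matrix.of a).det.natAbs := by
  classical
  have hβex : ∀ i, ∃ r : ℝ, ((r : ℝ) : AddCircle (1:ℝ)) = b i := fun i =>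
    QuotientAddGroup.mk_surjective (b i)
  choose β hβ using hβex
  rw [comps_eq a b β hdet hβ]
  set H := (LinearMap.range (Matrix.toLin' (Matrix.of a))).toAddSubgroup with hH
  have key : ∀ m m' : Fin n → ℤ, Reg a β m = Reg a β m' ↔
      (QuotientAddGroup.mk m : (Fin n → ℤ) ⧸ H) = QuotientAddGroup.mk m' := by
    intro m m'
    rw [QuotientAddGroup.eq]
    constructor
    · intro h
      have hne : (Reg a β m ∩ Reg a β m').Nonempty := by
        rw [h, inter_self]
        exact Reg_nonempty a β m' hdet
      obtain ⟨k, hk⟩ := Reg_inter a β m m' hne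
      refine ⟨k, ?_⟩
      simp only [Matrix.toLin'_apply, Submodule.coe_toAddSubgroup]  -- membership
      rw [hk]
      ext i
      simp [Matrix.toLin'_apply]
    · rintro ⟨k, hk⟩
      have hk' : m' = m + (Matrix.of a).mulVec k := by
        have : (Matrix.toLin' (Matrix.of a)) k = -m + m' := hk
        rw [Matrix.toLin'_apply] at this
        rw [this]
        abel
      rw [hk', Reg_shift]
  have hne : ∀ c : (Fin n → ℤ) ⧸ H, (QuotientAddGroup.mk (Quotient.out c) : (Fin n → ℤ) ⧸ H) = c :=
    fun c => Quotient.out_eq' c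
  let F : ((Fin n → ℤ) ⧸ H) → ↥(Set.range (Reg a β)) :=
    fun c => ⟨Reg a β (Quotient.out c), ⟨Quotient.out c, rfl⟩⟩
  have hbij : Function.Bijective F := by
    constructor
    · intro c c' h
      have h2 : Reg a β (Quotient.out c) = Reg a β (Quotient.out c') := congrArg Subtype.val h
      have := (key _ _).mp h2
      rwa [hne, hne] at this
    · rintro ⟨C, m, rfl⟩
      refine ⟨QuotientAddGroup.mk m, Subtype.ext ?_⟩
      exact (key _ _).mpr (by rw [hne])
  rw [← Nat.card_congr (Equiv.ofBijective F hbij)]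
  rw [← AddSubgroup.index_eq_card]
  exact index_range_toLin' (Matrix.of a) hdet
end

section
/- Let a ∈ ℤⁿ be an integer vector with gcd(a₁,…,aₙ) = 1, and let b₁,…,b_m ∈ ℝ/ℤ be m ≥ 1 pairwise distinct intercepts. Consider the arrangement of m pairwise parallel simple hyperplanes Hᵢ = θ_a⁻¹(bᵢ) on Tⁿ. Then the complement Tⁿ \ (H₁ ∪ ⋯ ∪ H_m) has exactly m connected components. -/
open Set

lemma finset_bezout {ι : Type*} [DecidableEq ι] (s : Finset ι) (a : ι → ℤ) :
    ∃ u : ι → ℤ, ∑ i ∈ s, a i * u i = s.gcd a := by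
  induction s using Finset.induction_on with
  | empty => exact ⟨0, by simp⟩
  | insert _ _ hi ih =>
    rename_i i s
    obtain ⟨u, hu⟩ := ih
    refine ⟨fun j => if j = i then Int.gcdA (a i) (s.gcd a) else u j * Int.gcdB (a i) (s.gcd a), ?_⟩
    rw [Finset.sum_insert hi, Finset.gcd_insert, ← Int.coe_gcd, Int.gcd_eq_gcd_ab]
    beta_reduce
    rw [if_pos rfl,
      Finset.sum_congr rfl (fun j hj => by rw [if_neg (by rintro rfl; exact hi hj)])]
    have : ∑ j ∈ s, a j * (u j * Int.gcdB (a i) (s.gcd a))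
        = (∑ j ∈ s, a j * u j) * Int.gcdB (a i) (s.gcd a) := by
      rw [Finset.sum_mul]
      exact Finset.sum_congr rfl fun j _ => (mul_assoc _ _ _).symm
    rw [this, hu]

-- partition lemma
lemma comps_partition {X : Type*} [TopologicalSpace X] {ι : Type*} (C : ι → Set X)
    (hc : ∀ i, IsConnected (C i)) (ho : ∀ i, IsOpen (C i))
    (hd : Pairwise (Function.onFun Disjoint C)) (x : X) {i : ι} (hx : x ∈ C i) :
    connectedComponentIn (⋃ j, C j) x = C i := by
  have hxU : x ∈ ⋃ j, C j := mem_iUnion.2 ⟨i, hx⟩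
  apply le_antisymm
  · have hK : IsPreconnected (connectedComponentIn (⋃ j, C j) x) :=
      isPreconnected_connectedComponentIn
    refine hK.subset_left_of_subset_union (ho i) (isOpen_iUnion fun j : {j // j ≠ i} => ho j)
      ?_ ?_ ⟨x, mem_connectedComponentIn hxU, hx⟩
    · exact Set.disjoint_iUnion_right.2 fun j => (hd j.2.symm ).symm.mono_left le_rfl |>.symm
    · refine (connectedComponentIn_subset _ _).trans ?_
      intro y hy
      rcases mem_iUnion.1 hy with ⟨j, hj⟩
      by_cases h : j = i
      · exact Or.inl (h ▸ hj)
      · exact Or.inr (mem_iUnion.2 ⟨⟨j, h⟩, hj⟩)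
  · exact (hc i).isPreconnected.subset_connectedComponentIn hx (subset_iUnion C i)

lemma theta_mk {n : ℕ} (a : Fin n → ℤ) (v : Fin n → ℝ) :
    theta a (fun j => ((v j : ℝ) : AddCircle (1:ℝ)))
      = ((∑ j, (a j : ℝ) * v j : ℝ) : AddCircle (1:ℝ)) := by
  have h := map_sum (QuotientAddGroup.mk' (AddSubgroup.zmultiples (1:ℝ)))
      (fun j => (a j : ℝ) * v j) Finset.univ
  unfold theta
  rw [show ((∑ j, (a j:ℝ) * v j : ℝ) : AddCircle (1:ℝ)) = _ from h]
  refine Finset.sum_congr rfl fun j _ => ?_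
  rw [← zsmul_eq_mul]
  exact map_zsmul (QuotientAddGroup.mk' _) _ _

lemma continuous_theta {n : ℕ} (a : Fin n → ℤ) : Continuous (theta a) :=
  continuous_finset_sum _ fun i _ => (continuous_apply i).zsmul (a i)

lemma preim_eq_image {n : ℕ} (a u : Fin n → ℤ) (hu : ∑ i, a i * u i = 1) (I : Set ℝ) :
    theta a ⁻¹' ((fun x : ℝ => (x : AddCircle (1:ℝ))) '' I)
      = (fun p : (Fin n → ℝ) × ℝ => fun j => ((p.1 j + (u j : ℝ) * p.2 : ℝ) : AddCircle (1:ℝ)))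
        '' ({y : Fin n → ℝ | ∑ i, (a i : ℝ) * y i = 0} ×ˢ I) := by
  have hsum : (∑ j, (a j : ℝ) * (u j : ℝ)) = 1 := by
    exact_mod_cast hu
  ext x
  constructor
  · rintro ⟨t, htI, hθ⟩
    set xt : Fin n → ℝ := fun j => ((AddCircle.equivIco 1 0 (x j)) : ℝ) with hxt
    have hmk : ∀ j, ((xt j : ℝ) : AddCircle (1:ℝ)) = x j := fun j =>
      (AddCircle.equivIco 1 0).symm_apply_apply (x j)
    have hxeq : x = fun j => ((xt j : ℝ) : AddCircle (1:ℝ)) := funext fun j => (hmk j).symm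
    have hθ2 : ((∑ j, (a j : ℝ) * xt j : ℝ) : AddCircle (1:ℝ)) = (t : AddCircle (1:ℝ)) := by
      rw [← theta_mk, ← hxeq]; exact hθ.symm
    rw [QuotientAddGroup.eq_iff_sub_mem, AddSubgroup.mem_zmultiples_iff] at hθ2
    obtain ⟨k, hk⟩ := hθ2
    have hk' : (∑ j, (a j : ℝ) * xt j) = t + k := by
      have : (k : ℝ) = ∑ j, (a j : ℝ) * xt j - t := by rw [← hk]; simp
      linarith [this]
    refine ⟨(fun j => xt j - (t + k) * u j, t), ⟨?_, htI⟩, ?_⟩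
    · have : ∑ j, (a j : ℝ) * (xt j - (t + k) * (u j : ℝ))
          = (∑ j, (a j : ℝ) * xt j) - (t + k) * ∑ j, (a j : ℝ) * (u j : ℝ) := by
        rw [Finset.mul_sum, ← Finset.sum_sub_distrib]
        exact Finset.sum_congr rfl fun j _ => by ring
      simp only [mem_setOf_eq]
      rw [this, hsum, hk']; ring
    · funext j
      simp only
      rw [show xt j - (t + k) * (u j : ℝ) + (u j : ℝ) * t = xt j - ((k * u j : ℤ) : ℝ) by push_cast; ring]
      rw [← hmk j, QuotientAddGroup.eq_iff_sub_mem]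
      rw [show xt j - ((k * u j : ℤ) : ℝ) - xt j = ((-(k * u j) : ℤ) : ℝ) by push_cast; ring]
      exact AddSubgroup.intCast_mem_zmultiples_one (-(k * u j))
  · rintro ⟨⟨y, t⟩, ⟨hy, ht⟩, rfl⟩
    refine ⟨t, ht, ?_⟩
    rw [theta_mk]
    symm
    congr 1
    have : ∑ j, (a j : ℝ) * (y j + (u j : ℝ) * t)
        = (∑ j, (a j : ℝ) * y j) + (∑ j, (a j : ℝ) * (u j : ℝ)) * t := by
      rw [Finset.sum_mul, ← Finset.sum_add_distrib]
      exact Finset.sum_congr rfl fun j _ => by ring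
    rw [this, hy, hsum]; ring

lemma isConnected_preim {n : ℕ} (a u : Fin n → ℤ) (hu : ∑ i, a i * u i = 1)
    {I : Set ℝ} (hI : Convex ℝ I) (hne : I.Nonempty) :
    IsConnected (theta a ⁻¹' ((fun x : ℝ => (x : AddCircle (1:ℝ))) '' I)) := by
  rw [preim_eq_image a u hu]
  set E : Set (Fin n → ℝ) := {y : Fin n → ℝ | ∑ i, (a i : ℝ) * y i = 0} with hEdef
  have hE : Convex ℝ E := by
    intro y hy z hz α β hα hβ hαβ
    simp only [hEdef, mem_setOf_eq] at hy hz ⊢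
    have : ∑ i, (a i : ℝ) * (α • y + β • z) i
        = α * ∑ i, (a i : ℝ) * y i + β * ∑ i, (a i : ℝ) * z i := by
      rw [Finset.mul_sum, Finset.mul_sum, ← Finset.sum_add_distrib]
      refine Finset.sum_congr rfl fun i _ => ?_
      simp only [Pi.add_apply, Pi.smul_apply, smul_eq_mul]
      ring
    rw [this, hy, hz]; ring
  have hne2 : (E ×ˢ I).Nonempty := ⟨(0, hne.choose), ⟨by simp [hEdef], hne.choose_spec⟩⟩
  have hconn : IsPreconnected (E ×ˢ I) := (hE.prod hI).isPreconnected
  refine IsConnected.image ⟨hne2, hconn⟩ _ (Continuous.continuousOn ?_)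
  refine continuous_pi fun j => Continuous.comp ?_ ?_
  · exact continuous_quot_mk
  · exact ((continuous_apply j).comp continuous_fst).add (continuous_const.mul continuous_snd)

/-- The complement of an arrangement of `m ≥ 1` pairwise parallel simple hyperplanes
`Hᵢ = θ_a⁻¹(bᵢ)` (with `gcd(a₁,…,aₙ) = 1` and pairwise distinct intercepts `bᵢ`)
has exactly `m` connected components. -/
theorem card_regions_parallel_arrangement {n m : ℕ} (hm : 1 ≤ m)
    (a : Fin n → ℤ) (hgcd : Finset.univ.gcd a = 1)
    (b : Fin m → AddCircle (1 : ℝ)) (hb : Function.Injective b) :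
    Nat.card ↥(comps (Set.univ \ ⋃ i, Hyp a (b i))) = m := by
  classical
  obtain ⟨u, hu⟩ := finset_bezout Finset.univ a
  rw [hgcd] at hu
  set r : Fin m → ℝ := fun i => (AddCircle.equivIco 1 0 (b i) : ℝ) with hrdef
  have hrmk : ∀ i, ((r i : ℝ) : AddCircle (1:ℝ)) = b i := fun i =>
    (AddCircle.equivIco 1 0).symm_apply_apply (b i)
  have hrmem : ∀ i, r i ∈ Ico (0:ℝ) 1 := fun i => by
    have h2 := (AddCircle.equivIco 1 0 (b i)).2
    simpa using h2
  have hrinj : Function.Injective r := fun i j h =>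
    hb (by rw [← hrmk i, ← hrmk j, h])
  set s : Finset ℝ := Finset.image r Finset.univ with hsdef
  have hcard : s.card = m := by
    rw [hsdef, Finset.card_image_of_injective _ hrinj, Finset.card_univ, Fintype.card_fin]
  set t : Fin m → ℝ := fun i => ((s.orderIsoOfFin hcard i : ℝ)) with htdef
  have htmono : StrictMono t := fun i j h =>
    Subtype.coe_lt_coe.2 ((s.orderIsoOfFin hcard).strictMono h)
  have ht_ex : ∀ i, ∃ j, t i = r j := fun i => by
    have h2 : t i ∈ s := (s.orderIsoOfFin hcard i).2
    rw [hsdef, Finset.mem_image] at h2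
    obtain ⟨j, _, hj⟩ := h2; exact ⟨j, hj.symm⟩
  have hr_ex : ∀ j, ∃ i, r j = t i := fun j => by
    have hmem : r j ∈ s := by rw [hsdef]; exact Finset.mem_image_of_mem _ (Finset.mem_univ j)
    obtain ⟨i, hi⟩ := (s.orderIsoOfFin hcard).surjective ⟨r j, hmem⟩
    exact ⟨i, by rw [htdef]; exact (congrArg Subtype.val hi).symm⟩
  have htmem : ∀ i, t i ∈ Ico (0:ℝ) 1 := fun i => by
    obtain ⟨j, hj⟩ := ht_ex i; rw [hj]; exact hrmem j
  set i0 : Fin m := ⟨0, hm⟩ with hi0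
  set z0 : ℝ := t i0 with hz0
  set T : Fin (m+1) → ℝ := Fin.snoc t (z0 + 1) with hTdef
  have hTcast : ∀ i : Fin m, T i.castSucc = t i := fun i => Fin.snoc_castSucc _ _ _
  have hTlast : T (Fin.last m) = z0 + 1 := Fin.snoc_last _ _
  have hTmono : StrictMono T := by
    rw [Fin.strictMono_iff_lt_succ]
    intro i
    rcases eq_or_ne i.succ (Fin.last m) with h | h
    · rw [h, hTcast, hTlast]
      exact lt_of_lt_of_le (htmem i).2 (by linarith [(htmem i0).1])
    · obtain ⟨j, hj⟩ := Fin.exists_castSucc_eq.2 h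
      rw [← hj, hTcast, hTcast]
      apply htmono
      have hv : (i : ℕ) + 1 = (j : ℕ) := by
        have := congrArg Fin.val hj
        simpa using this.symm
      exact Fin.lt_def.2 (by omega)
  have hT0 : T 0 = z0 := by
    have h0 : (0 : Fin (m+1)) = (i0).castSucc := by
      ext; simp [hi0]
    rw [h0, hTcast]
  have hwinT : ∀ i : Fin (m+1), T i ∈ Icc z0 (z0+1) := fun i =>
    ⟨hT0 ▸ hTmono.monotone (Fin.zero_le i), hTlast ▸ hTmono.monotone (Fin.le_last i)⟩
  have hioo_sub : ∀ i : Fin m, Ioo (T i.castSucc) (T i.succ) ⊆ Ico z0 (z0+1) := fun i x hx =>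
    ⟨le_of_lt (lt_of_le_of_lt (hwinT i.castSucc).1 hx.1), lt_of_lt_of_le hx.2 (hwinT i.succ).2⟩
  have hcoeinj : ∀ x ∈ Ico z0 (z0+1), ∀ y ∈ Ico z0 (z0+1),
      (x : AddCircle (1:ℝ)) = (y : AddCircle (1:ℝ)) → x = y := fun x hx y hy h =>
    (AddCircle.coe_eq_coe_iff_of_mem_Ico hx hy).1 h
  have htwin : ∀ i, t i ∈ Ico z0 (z0+1) := fun i =>
    ⟨htmono.monotone (Fin.le_def.2 (Nat.zero_le _)),
      lt_of_lt_of_le (htmem i).2 (by linarith [(htmem i0).1])⟩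
  set A : Fin m → Set (AddCircle (1:ℝ)) :=
    fun i => (fun x : ℝ => (x : AddCircle (1:ℝ))) '' Ioo (T i.castSucc) (T i.succ) with hAdef
  have hbt : range b = (fun x : ℝ => (x : AddCircle (1:ℝ))) '' (range t) := by
    ext c; constructor
    · rintro ⟨j, rfl⟩
      obtain ⟨i, hi⟩ := hr_ex j
      exact ⟨t i, ⟨i, rfl⟩, by show ((t i : ℝ) : AddCircle (1:ℝ)) = b j; rw [← hi, hrmk j]⟩
    · rintro ⟨x, ⟨i, rfl⟩, rfl⟩
      obtain ⟨j, hj⟩ := ht_ex i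
      exact ⟨j, by show b j = ((t i : ℝ) : AddCircle (1:ℝ)); rw [hj, hrmk j]⟩
  have hAdisj_b : ∀ i, A i ∩ range b = ∅ := by
    intro i
    ext c; simp only [mem_inter_iff, mem_empty_iff_false, iff_false, not_and]
    rintro ⟨x, hx, rfl⟩ hcb
    rw [hbt] at hcb
    obtain ⟨y, ⟨i', rfl⟩, hy⟩ := hcb
    have hxy : x = t i' := hcoeinj x (hioo_sub i hx) (t i') (htwin i') hy.symm
    subst hxy
    rcases le_or_gt i' i with h | h
    · have h2 : t i' ≤ t i := htmono.monotone h
      rw [← hTcast i] at h2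
      exact absurd hx.1 (not_lt.2 h2)
    · have h2 : T i.succ ≤ T i'.castSucc := hTmono.monotone (Fin.succ_le_castSucc_iff.2 h)
      rw [hTcast i'] at h2
      exact absurd hx.2 (not_lt.2 h2)
  have hAcover : (⋃ i, A i) = (range b)ᶜ := by
    apply Subset.antisymm
    · intro c hc hcb
      rcases mem_iUnion.1 hc with ⟨i, hci⟩
      have h2 : c ∈ A i ∩ range b := ⟨hci, hcb⟩
      rw [hAdisj_b i] at h2
      exact h2
    · intro c hc
      set z : ℝ := (AddCircle.equivIco 1 z0 c : ℝ) with hzdef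
      have hzmem : z ∈ Ico z0 (z0+1) := (AddCircle.equivIco 1 z0 c).2
      have hzmk : (z : AddCircle (1:ℝ)) = c := (AddCircle.equivIco 1 z0).symm_apply_apply c
      have hznt : ∀ i, z ≠ t i := by
        intro i hz
        refine hc ?_
        rw [hbt]
        exact ⟨t i, ⟨i, rfl⟩, by show ((t i : ℝ) : AddCircle (1:ℝ)) = c; rw [← hz, hzmk]⟩
      have hz0lt : T 0 < z := by
        rw [hT0]
        rcases lt_or_eq_of_le hzmem.1 with h | h
        · exact h
        · exact absurd h.symm (hznt i0)
      have hzlast : z < T (Fin.last m) := by rw [hTlast]; exact hzmem.2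
      set F : Finset (Fin (m+1)) := Finset.univ.filter (fun i => T i < z) with hF
      have hF0 : (0 : Fin (m+1)) ∈ F := Finset.mem_filter.2 ⟨Finset.mem_univ _, hz0lt⟩
      have hFne : F.Nonempty := ⟨0, hF0⟩
      have himax_mem : F.max' hFne ∈ F := F.max'_mem _
      have himax_lt : T (F.max' hFne) < z := (Finset.mem_filter.1 himax_mem).2
      have hne_last : F.max' hFne ≠ Fin.last m := by
        intro h; rw [h] at himax_lt; linarith [hzlast]
      obtain ⟨i, hi⟩ := Fin.exists_castSucc_eq.2 hne_last
      have hsucc_not : ¬ T i.succ < z := by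
        intro h
        have h2 : i.succ ∈ F := Finset.mem_filter.2 ⟨Finset.mem_univ _, h⟩
        have hle := F.le_max' _ h2
        rw [← hi] at hle
        exact absurd (lt_of_le_of_lt hle (Fin.castSucc_lt_succ (i := i))) (lt_irrefl _)
      have hzlt : z < T i.succ := by
        rcases lt_or_eq_of_le (not_lt.1 hsucc_not) with h | h
        · exact h
        · exfalso
          rcases eq_or_ne i.succ (Fin.last m) with hl | hl
          · rw [hl, hTlast] at h
            exact absurd hzmem.2 (not_lt.2 (le_of_eq h.symm))
          · obtain ⟨j, hj⟩ := Fin.exists_castSucc_eq.2 hl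
            rw [← hj, hTcast] at h
            exact hznt j h
      refine mem_iUnion.2 ⟨i, ⟨z, ⟨?_, hzlt⟩, hzmk⟩⟩
      rw [hi]; exact himax_lt
  set C : Fin m → Set (Torus n) := fun i => theta a ⁻¹' A i with hCdef
  have hCopen : ∀ i, IsOpen (C i) := fun i =>
    (continuous_theta a).isOpen_preimage _
      ((QuotientAddGroup.isOpenMap_coe) _ isOpen_Ioo)
  have hCconn : ∀ i, IsConnected (C i) := fun i =>
    isConnected_preim a u hu (convex_Ioo _ _)
      (nonempty_Ioo.2 (hTmono (Fin.castSucc_lt_succ (i := i))))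
  have hCdisj : Pairwise (Function.onFun Disjoint C) := by
    intro i j hij
    refine Disjoint.preimage _ ?_
    rw [Set.disjoint_left]
    rintro c ⟨x, hx, rfl⟩ ⟨y, hy, hxy⟩
    have hyx : y = x := hcoeinj y (hioo_sub j hy) x (hioo_sub i hx) hxy
    subst hyx
    rcases lt_or_gt_of_ne hij with h | h
    · have h2 : T i.succ ≤ T j.castSucc := hTmono.monotone (Fin.succ_le_castSucc_iff.2 h)
      exact absurd (lt_trans hx.2 (lt_of_le_of_lt h2 hy.1)) (lt_irrefl _)
    · have h2 : T j.succ ≤ T i.castSucc := hTmono.monotone (Fin.succ_le_castSucc_iff.2 h)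
      exact absurd (lt_trans hy.2 (lt_of_le_of_lt h2 hx.1)) (lt_irrefl _)
  have hU : (Set.univ \ ⋃ i, Hyp a (b i)) = ⋃ i, C i := by
    ext x
    simp only [mem_diff, mem_univ, true_and, mem_iUnion, Hyp, mem_setOf_eq, not_exists,
      hCdef, mem_preimage]
    constructor
    · intro h
      have h2 : theta a x ∈ (range b)ᶜ := by
        intro hc
        obtain ⟨j, hj⟩ := hc
        exact h j hj.symm
      rw [← hAcover] at h2
      exact mem_iUnion.1 h2
    · rintro ⟨i, hi⟩ j
      intro hj
      have h2 : theta a x ∈ (range b)ᶜ := by rw [← hAcover]; exact mem_iUnion.2 ⟨i, hi⟩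
      exact h2 ⟨j, hj.symm⟩
  rw [hU]
  have hcomps : comps (⋃ i, C i) = Set.range C := by
    ext S
    constructor
    · rintro ⟨x, hxU, rfl⟩
      rcases mem_iUnion.1 hxU with ⟨i, hxi⟩
      exact ⟨i, (comps_partition C hCconn hCopen hCdisj x hxi).symm⟩
    · rintro ⟨i, rfl⟩
      obtain ⟨x, hx⟩ := (hCconn i).nonempty
      exact ⟨x, mem_iUnion.2 ⟨i, hx⟩, (comps_partition C hCconn hCopen hCdisj x hx).symm⟩
  rw [hcomps]
  have hCinj : Function.Injective C := by
    intro i j h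
    by_contra hne
    obtain ⟨x, hx⟩ := (hCconn i).nonempty
    exact Set.disjoint_left.1 (hCdisj hne) hx (h ▸ hx)
  rw [Nat.card_congr (Equiv.ofInjective C hCinj).symm, Nat.card_eq_fintype_card, Fintype.card_fin]
end

section
/- Let (A, Tⁿ) be a toric hyperplane arrangement in general position, and let x ∈ L(A) be an element of its intersection poset with j = |{i : x ⊆ Hᵢ}|. Then the closed interval [Tⁿ, x] in L(A) is order-isomorphic to the Boolean lattice of all subsets of a j-element set, ordered by inclusion. -/
open Set

/-- The underlying set of the intersection poset `L(A)` of an arrangement: the whole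
torus `Tⁿ` together with all connected components of the nonempty intersections
`⋂_{i ∈ S} H i` over nonempty subsets `S`. The poset order is reverse inclusion. -/
def LSet {n m : ℕ} (H : Fin m → Set (Torus n)) : Set (Set (Torus n)) :=
  {Set.univ} ∪
    {C | ∃ S : Finset (Fin m), S.Nonempty ∧
      ∃ x ∈ ⋂ i ∈ S, H i, C = connectedComponentIn (⋂ i ∈ S, H i) x}

noncomputable def toT {n : ℕ} (w : Fin n → ℝ) : Torus n := fun j => (w j : AddCircle (1:ℝ))

lemma coe_sum_AC {n : ℕ} (f : Fin n → ℝ) :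
    ((∑ j, f j : ℝ) : AddCircle (1:ℝ)) = ∑ j, ((f j : ℝ) : AddCircle (1:ℝ)) := by
  classical
  induction (Finset.univ : Finset (Fin n)) using Finset.induction with
  | empty => simp
  | insert _ _ h ih => simp [Finset.sum_insert h, AddCircle.coe_add, ih]

lemma theta_add_toT {n : ℕ} (a : Fin n → ℤ) (q : Torus n) (w : Fin n → ℝ) :
    theta a (q + toT w) = theta a q + ((∑ j, (a j : ℝ) * w j : ℝ) : AddCircle (1:ℝ)) := by
  simp only [theta, Pi.add_apply, toT, smul_add, Finset.sum_add_distrib]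
  congr 1
  rw [coe_sum_AC]
  refine Finset.sum_congr rfl fun j _ => ?_
  rw [← AddCircle.coe_zsmul]
  congr 1
  push_cast [zsmul_eq_mul]
  ring

lemma half_ne_zero_AC : (((1:ℝ)/2 : ℝ) : AddCircle (1:ℝ)) ≠ 0 := by
  intro h
  rw [AddCircle.coe_eq_zero_iff] at h
  obtain ⟨k, hk⟩ := h
  rw [zsmul_eq_mul, mul_one] at hk
  have h2 : ((2*k : ℤ) : ℝ) = 1 := by push_cast; linarith
  have : (2*k : ℤ) = 1 := by exact_mod_cast h2
  omega

lemma line_mem_cc {n : ℕ} {F : Set (Torus n)} {q : Torus n} (v : Fin n → ℝ)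
    (hline : ∀ t : ℝ, q + toT (t • v) ∈ F) :
    q + toT v ∈ connectedComponentIn F q := by
  have hcont : Continuous (fun t : ℝ => q + toT (t • v)) := by
    apply continuous_pi
    intro j
    simp only [Pi.add_apply, toT, Pi.smul_apply, smul_eq_mul]
    exact continuous_const.add ((AddCircle.continuous_mk' 1).comp (continuous_mul_right _))
  have h0 : q + toT ((0:ℝ) • v) = q := by
    funext j; simp [toT]
  have hsub : Set.range (fun t : ℝ => q + toT (t • v)) ⊆ F := by
    rintro _ ⟨t, rfl⟩; exact hline t
  have hq : q ∈ Set.range (fun t : ℝ => q + toT (t • v)) := ⟨0, h0⟩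
  have := (isPreconnected_range hcont).subset_connectedComponentIn hq hsub
  exact this ⟨1, by show q + toT ((1:ℝ) • v) = q + toT v; rw [one_smul]⟩

lemma exists_dual {n : ℕ} {ι : Type*} [Fintype ι] (f : ι → (Fin n → ℚ))
    (hli : LinearIndependent ℚ f) (i₀ : ι) :
    ∃ v : Fin n → ℚ, (∑ j, f i₀ j * v j = 1/2) ∧ ∀ i, i ≠ i₀ → ∑ j, f i j * v j = 0 := by
  classical
  have hr := hli.linearIndepOn_id
  set s : Set (Fin n → ℚ) := Set.range f with hs
  let B := Module.Basis.extend hr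
  have hsub : s ⊆ hr.extend (subset_univ _) := hr.subset_extend _
  let idx : ι → hr.extend (subset_univ _) := fun i => ⟨f i, hsub (mem_range_self i)⟩
  let g : (Fin n → ℚ) →ₗ[ℚ] ℚ := B.coord (idx i₀)
  have hinj : Function.Injective f := hli.injective
  have hg : ∀ i : ι, g (f i) = if i = i₀ then 1 else 0 := by
    intro i
    have hfi : f i = B (idx i) := (Module.Basis.extend_apply_self hr (idx i)).symm
    rw [hfi]
    show B.coord (idx i₀) (B (idx i)) = _
    rw [Module.Basis.coord_apply, Module.Basis.repr_self, Finsupp.single_apply]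
    by_cases h : i = i₀
    · subst h; simp
    · rw [if_neg, if_neg h]
      intro hc
      exact h (hinj (by simpa [idx, Subtype.ext_iff] using hc))
  have hgu : ∀ u : Fin n → ℚ, g u = ∑ j, u j * g (Pi.single j 1) := by
    intro u
    conv_lhs => rw [← Finset.univ_sum_single u]
    rw [map_sum]
    refine Finset.sum_congr rfl fun j _ => ?_
    have : Pi.single j (u j) = u j • (Pi.single j 1 : Fin n → ℚ) := by
      rw [← Pi.single_smul, smul_eq_mul, mul_one]
    rw [this, map_smul, smul_eq_mul]
  have key : ∀ i, ∑ j, f i j * ((1/2) * g (Pi.single j 1)) = (1/2) * g (f i) := by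
    intro i
    rw [hgu (f i), Finset.mul_sum]
    exact Finset.sum_congr rfl fun j _ => by ring
  refine ⟨fun j => (1/2) * g (Pi.single j 1), ?_, ?_⟩
  · rw [key i₀, hg i₀, if_pos rfl, mul_one]
  · intro i hi
    rw [key i, hg i, if_neg hi, mul_zero]

/-- For a toric hyperplane arrangement in general position and an element `x` of its
intersection poset `L(A)` with `j = |{i : x ⊆ Hᵢ}|`, the closed interval `[Tⁿ, x]` in
`L(A)` (ordered by reverse inclusion) is order-isomorphic to the Boolean lattice of all
subsets of a `j`-element set. -/
theorem interval_orderIso_boolean {n m : ℕ}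
    (a : Fin m → Fin n → ℤ) (b : Fin m → AddCircle (1 : ℝ))
    (ha : ∀ i, a i ≠ 0) (hgp : GenPos a b)
    (x : Set (Torus n)) (hx : x ∈ LSet (fun i => Hyp (a i) (b i)))
    (j : ℕ) (hj : j = Nat.card {i : Fin m // x ⊆ Hyp (a i) (b i)}) :
    Nonempty
      (({y : Set (Torus n) // y ∈ LSet (fun i => Hyp (a i) (b i)) ∧ x ⊆ y})ᵒᵈ ≃o
        Set (Fin j)) := by
  classical
  set H : Fin m → Set (Torus n) := fun i => Hyp (a i) (b i) with hHdef
  have hLSiff : ∀ y : Set (Torus n), y ∈ LSet H ↔ (y = univ ∨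
      ∃ S : Finset (Fin m), S.Nonempty ∧
        ∃ p ∈ ⋂ i ∈ S, H i, y = connectedComponentIn (⋂ i ∈ S, H i) p) := by
    intro y
    simp [LSet, mem_union, mem_singleton_iff]
  -- hyperplanes are proper
  have hne : ∀ i : Fin m, H i ≠ univ := by
    intro i hiu
    obtain ⟨j₀, hj₀⟩ : ∃ j₀, a i j₀ ≠ 0 := Function.ne_iff.mp (ha i)
    have hcast : ((a i j₀ : ℝ)) ≠ 0 := Int.cast_ne_zero.mpr hj₀
    set w : Fin n → ℝ := Pi.single j₀ (1/(2*(a i j₀ : ℝ))) with hw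
    have hsum : ∑ jj, (a i jj : ℝ) * w jj = 1/2 := by
      rw [Finset.sum_eq_single j₀]
      · rw [hw, Pi.single_eq_same]; field_simp
      · intro jj _ hjj; rw [hw, Pi.single_eq_of_ne hjj, mul_zero]
      · intro h; exact absurd (Finset.mem_univ j₀) h
    have h0 : theta (a i) (0 : Torus n) = b i := by
      have : (0 : Torus n) ∈ H i := hiu ▸ mem_univ _
      exact this
    have h1 : theta (a i) ((0 : Torus n) + toT w) = b i := by
      have : ((0 : Torus n) + toT w) ∈ H i := hiu ▸ mem_univ _
      exact this
    rw [theta_add_toT, h0, hsum] at h1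
    exact half_ne_zero_AC (add_eq_left.mp h1)
  -- base point and connectivity of x
  obtain ⟨q, hqx, hxpc⟩ : ∃ q, q ∈ x ∧ IsPreconnected x := by
    rcases (hLSiff x).mp hx with rfl | ⟨S₀, hS₀, p₀, hp₀, hxe⟩
    · exact ⟨0, mem_univ _, isPreconnected_univ⟩
    · subst hxe
      exact ⟨p₀, mem_connectedComponentIn hp₀, isPreconnected_connectedComponentIn⟩
  have hxsubH : ∀ (i : Fin m), x ⊆ H i → q ∈ H i := fun i h => h hqx
  -- linear independence of the normals of hyperplanes containing x
  set SI : Finset (Fin m) := Finset.univ.filter (fun i => x ⊆ H i) with hSI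
  have hqSI : q ∈ ⋂ i ∈ SI, Hyp (a i) (b i) := by
    simp only [mem_iInter]
    intro i hi
    exact (Finset.mem_filter.mp hi).2 hqx
  have hli := hgp SI ⟨q, hqSI⟩
  have hdual : ∀ (i₀ : Fin m), x ⊆ H i₀ →
      ∃ v : Fin n → ℝ, (∑ jj, (a i₀ jj : ℝ) * v jj = 1/2) ∧
        ∀ i, x ⊆ H i → i ≠ i₀ → ∑ jj, (a i jj : ℝ) * v jj = 0 := by
    intro i₀ hi₀
    have hmem : i₀ ∈ SI := Finset.mem_filter.mpr ⟨Finset.mem_univ _, hi₀⟩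
    obtain ⟨vq, hv₀, hv⟩ := exists_dual (fun i : SI => fun jj => (a i.1 jj : ℚ)) hli ⟨i₀, hmem⟩
    refine ⟨fun jj => (vq jj : ℝ), ?_, ?_⟩
    · have h' : ∑ jj, (a i₀ jj : ℚ) * vq jj = 1/2 := hv₀
      have h'' : ((∑ jj, (a i₀ jj : ℚ) * vq jj : ℚ) : ℝ) = ((1/2 : ℚ) : ℝ) := by rw [h']
      push_cast at h''
      exact h''
    · intro i hi hnei
      have hmi : i ∈ SI := Finset.mem_filter.mpr ⟨Finset.mem_univ _, hi⟩
      have h' : ∑ jj, (a i jj : ℚ) * vq jj = 0 :=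
        hv ⟨i, hmi⟩ (fun hc => hnei (congrArg Subtype.val hc))
      have h'' : ((∑ jj, (a i jj : ℚ) * vq jj : ℚ) : ℝ) = ((0 : ℚ) : ℝ) := by rw [h']
      push_cast at h''
      exact h''
  -- the component maps
  let I := {i : Fin m // x ⊆ H i}
  let Kf : Set I → Finset (Fin m) :=
    fun T => Finset.univ.filter (fun i => ∃ h : x ⊆ H i, (⟨i, h⟩ : I) ∈ T)
  let K : Set I → Set (Torus n) := fun T => ⋂ i ∈ Kf T, H i
  let G : Set I → Set (Torus n) := fun T => connectedComponentIn (K T) q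
  have hKf : ∀ (T : Set I) (i : Fin m), i ∈ Kf T ↔ ∃ h : x ⊆ H i, (⟨i, h⟩ : I) ∈ T := by
    intro T i; simp [Kf]
  have hmemK : ∀ (T : Set I) (p : Torus n), p ∈ K T ↔ ∀ i ∈ Kf T, p ∈ H i := by
    intro T p; simp [K, mem_iInter]
  have hxK : ∀ T, x ⊆ K T := by
    intro T p hp
    rw [hmemK]
    intro i hi
    obtain ⟨h, _⟩ := (hKf T i).mp hi
    exact h hp
  have hqK : ∀ T, q ∈ K T := fun T => hxK T hqx
  have hxG : ∀ T, x ⊆ G T := fun T => hxpc.subset_connectedComponentIn hqx (hxK T)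
  have hGK : ∀ T, G T ⊆ K T := fun T => connectedComponentIn_subset _ _
  have hKanti : ∀ T T', T ⊆ T' → K T' ⊆ K T := by
    intro T T' hTT p hp
    rw [hmemK] at hp ⊢
    intro i hi
    obtain ⟨h, hT⟩ := (hKf T i).mp hi
    exact hp i ((hKf T' i).mpr ⟨h, hTT hT⟩)
  have hGanti : ∀ T T', T ⊆ T' → G T' ⊆ G T :=
    fun T T' h => connectedComponentIn_mono q (hKanti T T' h)
  have hKempty : K (∅ : Set I) = univ := by
    apply eq_univ_of_forall
    intro p
    rw [hmemK]
    intro i hi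
    obtain ⟨h, hT⟩ := (hKf _ i).mp hi
    exact absurd hT (notMem_empty _)
  have hGempty : G (∅ : Set I) = univ := by
    show connectedComponentIn (K ∅) q = univ
    rw [hKempty, connectedComponentIn_univ, PreconnectedSpace.connectedComponent_eq_univ]
  have hGLS : ∀ T, G T ∈ LSet H := by
    intro T
    rcases T.eq_empty_or_nonempty with rfl | ⟨⟨i, hxi⟩, hiT⟩
    · rw [hGempty, hLSiff]; exact Or.inl rfl
    · rw [hLSiff]
      exact Or.inr ⟨Kf T, ⟨i, (hKf T i).mpr ⟨hxi, hiT⟩⟩, q, hqK T, rfl⟩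
  have hGsub : ∀ (T : Set I) (i : Fin m), (∃ h : x ⊆ H i, (⟨i, h⟩ : I) ∈ T) → G T ⊆ H i := by
    intro T i hi
    refine (hGK T).trans ?_
    intro p hp
    rw [hmemK] at hp
    exact hp i ((hKf T i).mpr hi)
  -- key: components of partial intersections escape the other hyperplanes
  have hGnot : ∀ (T : Set I) (i₀ : Fin m) (h₀ : x ⊆ H i₀), (⟨i₀, h₀⟩ : I) ∉ T →
      ¬ G T ⊆ H i₀ := by
    intro T i₀ h₀ hT hsub
    obtain ⟨v, hv₀, hv⟩ := hdual i₀ h₀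
    have hline : ∀ t : ℝ, q + toT (t • v) ∈ K T := by
      intro t
      rw [hmemK]
      intro i hi
      obtain ⟨h, hiT⟩ := (hKf T i).mp hi
      have hnei : i ≠ i₀ := by rintro rfl; exact hT hiT
      have hq' : theta (a i) q = b i := hxsubH i h
      have hsum : ∑ jj, (a i jj : ℝ) * (t • v) jj = 0 := by
        simp only [Pi.smul_apply, smul_eq_mul]
        calc ∑ jj, (a i jj : ℝ) * (t * v jj) = t * ∑ jj, (a i jj : ℝ) * v jj := by
              rw [Finset.mul_sum]
              exact Finset.sum_congr rfl fun jj _ => by ring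
          _ = 0 := by rw [hv i h hnei, mul_zero]
      show theta (a i) (q + toT (t • v)) = b i
      rw [theta_add_toT, hq', hsum]
      simp
    have hp : q + toT v ∈ G T := line_mem_cc v hline
    have hth : theta (a i₀) (q + toT v) = b i₀ := hsub hp
    have hq0 : theta (a i₀) q = b i₀ := hxsubH i₀ h₀
    rw [theta_add_toT, hq0, hv₀] at hth
    exact half_ne_zero_AC (add_eq_left.mp hth)
  -- membership description of the filter for canonical sets
  have hFGmem : ∀ (y : Set (Torus n)), x ⊆ y → ∀ i : Fin m,
      (i ∈ Kf {ii : I | y ⊆ H ii.1} ↔ y ⊆ H i) := by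
    intro y hxy i
    rw [hKf]
    constructor
    · rintro ⟨h, hy⟩; exact hy
    · intro hy; exact ⟨hxy.trans hy, hy⟩
  -- canonical form of interval elements
  have hcanon : ∀ y, y ∈ LSet H → x ⊆ y → y = G {ii : I | y ⊆ H ii.1} := by
    intro y hy hxy
    have hyK : y ⊆ K {ii : I | y ⊆ H ii.1} := by
      intro p hp
      rw [hmemK]
      intro i hi
      exact ((hFGmem y hxy i).mp hi) hp
    rcases (hLSiff y).mp hy with rfl | ⟨S, hS, p₀, hp₀, rfl⟩
    · have hTe : {ii : I | univ ⊆ H ii.1} = (∅ : Set I) := by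
        ext ⟨i, hxi⟩
        simp only [mem_setOf_eq, mem_empty_iff_false, iff_false]
        intro hu
        exact hne i (univ_subset_iff.mp hu)
      rw [hTe, hGempty]
    · set y := connectedComponentIn (⋂ i ∈ S, H i) p₀ with hy_def
      have hysubJ : y ⊆ ⋂ i ∈ S, H i := connectedComponentIn_subset _ _
      have hyH : ∀ i ∈ S, y ⊆ H i := by
        intro i hi
        exact hysubJ.trans (iInter₂_subset i hi)
      have hKJ : K {ii : I | y ⊆ H ii.1} ⊆ ⋂ i ∈ S, H i := by
        intro p hp
        rw [hmemK] at hp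
        rw [mem_iInter₂]
        intro i hi
        exact hp i ((hFGmem y hxy i).mpr (hyH i hi))
      have hp₀y : p₀ ∈ y := mem_connectedComponentIn hp₀
      have h1 : y ⊆ connectedComponentIn (K {ii : I | y ⊆ H ii.1}) p₀ :=
        isPreconnected_connectedComponentIn.subset_connectedComponentIn hp₀y hyK
      have h2 : connectedComponentIn (K {ii : I | y ⊆ H ii.1}) p₀ ⊆ y :=
        connectedComponentIn_mono p₀ hKJ
      have heq : y = connectedComponentIn (K {ii : I | y ⊆ H ii.1}) p₀ := h1.antisymm h2
      have hqy : q ∈ connectedComponentIn (K {ii : I | y ⊆ H ii.1}) p₀ := heq ▸ hxy hqx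
      exact heq.trans (connectedComponentIn_eq hqy)
  have hFG : ∀ T : Set I, {ii : I | G T ⊆ H ii.1} = T := by
    intro T
    ext ⟨i, hxi⟩
    simp only [mem_setOf_eq]
    constructor
    · intro hG
      by_contra hT
      exact hGnot T i hxi hT hG
    · intro hT
      exact hGsub T i ⟨hxi, hT⟩
  have horder : ∀ (y₁ y₂ : Set (Torus n)), y₁ ∈ LSet H → x ⊆ y₁ → y₂ ∈ LSet H → x ⊆ y₂ →
      (y₁ ⊆ y₂ ↔ {ii : I | y₂ ⊆ H ii.1} ⊆ {ii : I | y₁ ⊆ H ii.1}) := by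
    intro y₁ y₂ h₁ hx₁ h₂ hx₂
    constructor
    · intro h ii hii
      exact h.trans hii
    · intro h
      calc y₁ = G {ii : I | y₁ ⊆ H ii.1} := hcanon y₁ h₁ hx₁
        _ ⊆ G {ii : I | y₂ ⊆ H ii.1} := hGanti _ _ h
        _ = y₂ := (hcanon y₂ h₂ hx₂).symm
  -- assemble the equivalence
  let E := {y : Set (Torus n) // y ∈ LSet H ∧ x ⊆ y}
  let Fm : E → Set I := fun y => {ii : I | y.1 ⊆ H ii.1}
  let Gm : Set I → E := fun T => ⟨G T, hGLS T, hxG T⟩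
  have hleft : ∀ y : E, Gm (Fm y) = y := fun y => Subtype.ext (hcanon y.1 y.2.1 y.2.2).symm
  have hright : ∀ T : Set I, Fm (Gm T) = T := fun T => hFG T
  let e : E ≃ Set I := ⟨Fm, Gm, hleft, hright⟩
  have hcard : Fintype.card I = j := by rw [hj, Nat.card_eq_fintype_card]
  let e2 : I ≃ Fin j := Fintype.equivFinOfCardEq hcard
  refine ⟨OrderIso.trans ⟨(OrderDual.ofDual (α := E)).trans e, ?_⟩
    ⟨Equiv.Set.congr e2, ?_⟩⟩
  · intro y₁ y₂
    exact (horder (OrderDual.ofDual y₂).1 (OrderDual.ofDual y₁).1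
      (OrderDual.ofDual y₂).2.1 (OrderDual.ofDual y₂).2.2
      (OrderDual.ofDual y₁).2.1 (OrderDual.ofDual y₁).2.2).symm
  · intro s t
    exact Set.image_subset_image_iff e2.injective
end
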